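/- arXiv:1510.07170 — 2 statements merged into one kernel-verified Lean document; each statement's English description precedes it below -/
import Mathlib

section
/- Fix an initial demand pmf P_{X₁} on 𝒳, a Markov transition matrix Q on 𝒳, an initial battery pmf P_{S₁} on 𝒮, and battery dynamics S_{t+1} = S_t + Y_t − X_t. For any causal policy q^a = (q^a_1,…,q^a_T), given by conditional pmfs q^a_t(y_t | x^t, s^t, y^{t−1}), there exists a policy q^b = (q^b_1,…,q^b_T) in Q_B, given by conditional pmfs q^b_t(y_t | x_t, s_t, y^{t−1}), such that for every t ∈ {1,…,T} the joint pmf of (X_t, S_t, Y^t) induced by q^b equals that induced by q^a; consequently Σ_{t=1}^T I^{q^a}(X_t, S_t; Y_t | Y^{t−1}) = Σ_{t=1}^T I^{q^b}(X_t, S_t; Y_t | Y^{t−1}). -/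
open Finset
open scoped Classical

namespace SmartMeter

/-! ### Basic information measures for finitely supported distributions.
All entropies and mutual informations are in bits (base-2 logarithms). -/

/-- Probability that the random variable `Z` takes the value `z` under the pmf `p`. -/
noncomputable def pr {Ω α : Type*} [Fintype Ω] [DecidableEq α]
    (p : Ω → ℝ) (Z : Ω → α) (z : α) : ℝ :=
  ∑ ω ∈ Finset.univ.filter (fun ω => Z ω = z), p ω

/-- Shannon entropy (in bits) of the random variable `Z` under the pmf `p`. -/
noncomputable def ent {Ω α : Type*} [Fintype Ω] [DecidableEq α]
    (p : Ω → ℝ) (Z : Ω → α) : ℝ :=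
  -∑ z ∈ Finset.univ.image Z, pr p Z z * Real.logb 2 (pr p Z z)

/-- Mutual information `I(A; B)`. -/
noncomputable def mutInfo {Ω α β : Type*} [Fintype Ω] [DecidableEq α] [DecidableEq β]
    (p : Ω → ℝ) (A : Ω → α) (B : Ω → β) : ℝ :=
  ent p A + ent p B - ent p (fun ω => (A ω, B ω))

/-- Conditional entropy `H(A | C)`. -/
noncomputable def condEnt {Ω α γ : Type*} [Fintype Ω] [DecidableEq α] [DecidableEq γ]
    (p : Ω → ℝ) (A : Ω → α) (C : Ω → γ) : ℝ :=
  ent p (fun ω => (A ω, C ω)) - ent p C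

/-- Conditional mutual information `I(A; B | C)`. -/
noncomputable def condMutInfo {Ω α β γ : Type*} [Fintype Ω] [DecidableEq α] [DecidableEq β]
    [DecidableEq γ] (p : Ω → ℝ) (A : Ω → α) (B : Ω → β) (C : Ω → γ) : ℝ :=
  ent p (fun ω => (A ω, C ω)) + ent p (fun ω => (B ω, C ω))
    - ent p (fun ω => (A ω, B ω, C ω)) - ent p C

/-- `p` is a probability mass function on the finite type `Ω`. -/
def IsPMF {Ω : Type*} [Fintype Ω] (p : Ω → ℝ) : Prop :=
  (∀ ω, 0 ≤ p ω) ∧ ∑ ω, p ω = 1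

/-- Extension of a pmf on `{0, …, n}` to an integer-indexed function (zero out of range). -/
noncomputable def extZ {n : ℕ} (f : Fin (n + 1) → ℝ) (k : ℤ) : ℝ :=
  if h : 0 ≤ k ∧ k ≤ (n : ℤ) then f ⟨k.toNat, by omega⟩ else 0

/-! ### The single-letter quantity `J*` -/

/-- `I(S - X; X)` for independent `X ~ PX` on `{0,…,mx}` and `S ~ θ` on `{0,…,ms}`. -/
noncomputable def iidMI (mx ms : ℕ) (PX : Fin (mx + 1) → ℝ) (θ : Fin (ms + 1) → ℝ) : ℝ :=
  mutInfo (fun ω : Fin (mx + 1) × Fin (ms + 1) => PX ω.1 * θ ω.2)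
    (fun ω => ((ω.2 : ℕ) : ℤ) - ((ω.1 : ℕ) : ℤ)) (fun ω => ω.1)

/-- `J* = min over pmfs θ on 𝒮 of I(S - X; X)`. -/
noncomputable def Jstar (mx ms : ℕ) (PX : Fin (mx + 1) → ℝ) : ℝ :=
  sInf {r : ℝ | ∃ θ : Fin (ms + 1) → ℝ, IsPMF θ ∧ iidMI mx ms PX θ = r}

/-! ### The structured policy `b*` -/

/-- `ξ(w) = Σ_{(x,s) : s - x = w} PX(x) θ(s)`, the pmf of `W = S - X`. -/
noncomputable def xiOf (mx ms : ℕ) (PX : Fin (mx + 1) → ℝ) (θ : Fin (ms + 1) → ℝ)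
    (w : ℤ) : ℝ :=
  ∑ x : Fin (mx + 1), ∑ s : Fin (ms + 1),
    if ((s : ℕ) : ℤ) - ((x : ℕ) : ℤ) = w then PX x * θ s else 0

/-- The structured policy with respect to `(θ, ξ)`:
`b(y|w) = PX(y) θ(y + w) / ξ(w)` for `y ∈ 𝒳 ∩ 𝒴₀(w)` (when `ξ(w) > 0`), else `0`. -/
noncomputable def bstar (mx my ms : ℕ) (PX : Fin (mx + 1) → ℝ) (θ : Fin (ms + 1) → ℝ)
    (w : ℤ) (y : Fin (my + 1)) : ℝ :=
  if xiOf mx ms PX θ w = 0 then 0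
  else extZ PX ((y : ℕ) : ℤ) * extZ θ (((y : ℕ) : ℤ) + w) / xiOf mx ms PX θ w

/-! ### Trajectory spaces, policies and induced joint laws.
Time is indexed from `0`; `ω = (s₁, x, y)` records the initial battery state `S₁ = ω.1`,
the demands `X_{t+1} = ω.2.1 t` and the outputs `Y_{t+1} = ω.2.2 t` for `t = 0, …, T-1`. -/

/-- Trajectories of horizon `T`. -/
abbrev Traj (mx my ms T : ℕ) :=
  Fin (ms + 1) × (Fin T → Fin (mx + 1)) × (Fin T → Fin (my + 1))

variable {mx my ms T : ℕ}

/-- Demand at (0-based) time `t`, as an integer (junk value `0` for `t ≥ T`). -/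
def Xat (ω : Traj mx my ms T) (t : ℕ) : ℤ :=
  if h : t < T then ((ω.2.1 ⟨t, h⟩ : ℕ) : ℤ) else 0

/-- Output at (0-based) time `t`, as an integer (junk value `0` for `t ≥ T`). -/
def Yat (ω : Traj mx my ms T) (t : ℕ) : ℤ :=
  if h : t < T then ((ω.2.2 ⟨t, h⟩ : ℕ) : ℤ) else 0

/-- Battery state at (0-based) time `t`: `S_{t+1} = S_t + Y_t - X_t`, `Sat ω 0 = S₁`. -/
def Sat (ω : Traj mx my ms T) (t : ℕ) : ℤ :=
  ((ω.1 : ℕ) : ℤ) + ∑ i ∈ Finset.range t, (Yat ω i - Xat ω i)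

/-- `W_t = S_t - X_t`. -/
def Wat (ω : Traj mx my ms T) (t : ℕ) : ℤ := Sat ω t - Xat ω t

/-- A general causal (class `Q_A`) randomized battery policy:
`q_t(y_t | x^t, s^t, y^{t-1})`; since `s^t` is determined by `(s₁, x^{t-1}, y^{t-1})`,
the policy is a function of `(x^t, s₁, y^{t-1})`. -/
def PolicyA (mx my ms : ℕ) : Type :=
  (t : ℕ) → (Fin (t + 1) → Fin (mx + 1)) → Fin (ms + 1) → (Fin t → Fin (my + 1)) →
    Fin (my + 1) → ℝ

/-- A class-`Q_B` policy: `q_t(y_t | x_t, s_t, y^{t-1})`. -/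
def PolicyB (mx my ms : ℕ) : Type :=
  (t : ℕ) → Fin (mx + 1) → ℤ → (Fin t → Fin (my + 1)) → Fin (my + 1) → ℝ

/-- The battery state `S_t` computed from `s₁` and the history `(x^t, y^{t-1})`. -/
def hstate {t : ℕ} (s1 : Fin (ms + 1)) (x : Fin (t + 1) → Fin (mx + 1))
    (y : Fin t → Fin (my + 1)) : ℤ :=
  ((s1 : ℕ) : ℤ) + ∑ i : Fin t, (((y i : ℕ) : ℤ) - ((x i.castSucc : ℕ) : ℤ))

/-- Each `q_t(· | x^t, s^t, y^{t-1})` is a pmf on `𝒴`. -/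
def CondPMFA (q : PolicyA mx my ms) : Prop :=
  ∀ (t : ℕ) (x : Fin (t + 1) → Fin (mx + 1)) (s1 : Fin (ms + 1)) (y : Fin t → Fin (my + 1)),
    (∀ yt, 0 ≤ q t x s1 y yt) ∧ ∑ yt, q t x s1 y yt = 1

/-- Feasibility of a class-`Q_A` policy: conditional pmfs supported on
`𝒴₀(s_t - x_t) = {y ∈ 𝒴 : s_t - x_t + y ∈ 𝒮}`. -/
def FeasibleA (q : PolicyA mx my ms) : Prop :=
  CondPMFA q ∧
  ∀ (t : ℕ) (x : Fin (t + 1) → Fin (mx + 1)) (s1 : Fin (ms + 1)) (y : Fin t → Fin (my + 1)),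
    ∀ yt, q t x s1 y yt ≠ 0 →
      0 ≤ hstate s1 x y - ((x (Fin.last t) : ℕ) : ℤ) + ((yt : ℕ) : ℤ) ∧
      hstate s1 x y - ((x (Fin.last t) : ℕ) : ℤ) + ((yt : ℕ) : ℤ) ≤ (ms : ℤ)

/-- Each `q_t(· | x_t, s_t, y^{t-1})` is a pmf on `𝒴`. -/
def CondPMFB (q : PolicyB mx my ms) : Prop :=
  ∀ (t : ℕ) (xt : Fin (mx + 1)) (s : ℤ) (y : Fin t → Fin (my + 1)),
    (∀ yt, 0 ≤ q t xt s y yt) ∧ ∑ yt, q t xt s y yt = 1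

/-- Feasibility of a class-`Q_B` policy. -/
def FeasibleB (q : PolicyB mx my ms) : Prop :=
  CondPMFB q ∧
  ∀ (t : ℕ) (xt : Fin (mx + 1)) (s : ℤ) (y : Fin t → Fin (my + 1)),
    0 ≤ s → s ≤ (ms : ℤ) →
    ∀ yt, q t xt s y yt ≠ 0 →
      0 ≤ s - ((xt : ℕ) : ℤ) + ((yt : ℕ) : ℤ) ∧
      s - ((xt : ℕ) : ℤ) + ((yt : ℕ) : ℤ) ≤ (ms : ℤ)

/-- The demand prefix `x^t = (x_0, …, x_t)` of a trajectory. -/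
def prefX (ω : Traj mx my ms T) (t : Fin T) : Fin ((t : ℕ) + 1) → Fin (mx + 1) :=
  fun i => ω.2.1 ⟨(i : ℕ), lt_of_le_of_lt (Nat.lt_succ_iff.mp i.isLt) t.isLt⟩

/-- The output prefix `y^{t-1} = (y_0, …, y_{t-1})` of a trajectory. -/
def prefY (ω : Traj mx my ms T) (t : Fin T) : Fin (t : ℕ) → Fin (my + 1) :=
  fun i => ω.2.2 ⟨(i : ℕ), i.isLt.trans t.isLt⟩

/-- Joint law on trajectories induced by i.i.d. demand `PX`, initial battery pmf `PS1`
(independent of the demand), and a class-`Q_A` policy `q`. -/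
noncomputable def jointA (PS1 : Fin (ms + 1) → ℝ) (PX : Fin (mx + 1) → ℝ)
    (q : PolicyA mx my ms) (T : ℕ) (ω : Traj mx my ms T) : ℝ :=
  PS1 ω.1 * ∏ t : Fin T,
    (PX (ω.2.1 t) * q (t : ℕ) (prefX ω t) ω.1 (prefY ω t) (ω.2.2 t))

/-- Weight of a demand trajectory under a Markov chain `(PX1, Qm)`. -/
noncomputable def markovWt (PX1 : Fin (mx + 1) → ℝ) (Qm : Fin (mx + 1) → Fin (mx + 1) → ℝ)
    {T : ℕ} (x : Fin T → Fin (mx + 1)) : ℝ :=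
  ∏ t : Fin T,
    if _h : (t : ℕ) = 0 then PX1 (x t)
    else Qm (x ⟨(t : ℕ) - 1, lt_of_le_of_lt (Nat.sub_le _ _) t.isLt⟩) (x t)

/-- Joint law on trajectories induced by Markov demand and a class-`Q_A` policy. -/
noncomputable def jointAMarkov (PS1 : Fin (ms + 1) → ℝ) (PX1 : Fin (mx + 1) → ℝ)
    (Qm : Fin (mx + 1) → Fin (mx + 1) → ℝ) (q : PolicyA mx my ms) (T : ℕ)
    (ω : Traj mx my ms T) : ℝ :=
  PS1 ω.1 * markovWt PX1 Qm ω.2.1 *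
    ∏ t : Fin T, q (t : ℕ) (prefX ω t) ω.1 (prefY ω t) (ω.2.2 t)

/-- Joint law on trajectories induced by Markov demand and a class-`Q_B` policy. -/
noncomputable def jointBMarkov (PS1 : Fin (ms + 1) → ℝ) (PX1 : Fin (mx + 1) → ℝ)
    (Qm : Fin (mx + 1) → Fin (mx + 1) → ℝ) (q : PolicyB mx my ms) (T : ℕ)
    (ω : Traj mx my ms T) : ℝ :=
  PS1 ω.1 * markovWt PX1 Qm ω.2.1 *
    ∏ t : Fin T, q (t : ℕ) (ω.2.1 t) (Sat ω (t : ℕ)) (prefY ω t) (ω.2.2 t)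

/-- The memoryless time-invariant policy `q_t(y | x, s) = b*(y | s - x)`, as a member of the
class of general causal policies. -/
noncomputable def structuredPolicyA (mx my ms : ℕ) (PX : Fin (mx + 1) → ℝ)
    (θ : Fin (ms + 1) → ℝ) : PolicyA mx my ms :=
  fun t x s1 y yt => bstar mx my ms PX θ (hstate s1 x y - ((x (Fin.last t) : ℕ) : ℤ)) yt


/-! ### Auxiliary machinery -/

section PrEnt

variable {Ω Ω' α β : Type*} [Fintype Ω] [Fintype Ω'] [DecidableEq α] [DecidableEq β]

lemma pr_eq_sum_ite (p : Ω → ℝ) (Z : Ω → α) (z : α) :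
    pr p Z z = ∑ ω, if Z ω = z then p ω else 0 := by
  rw [pr, Finset.sum_filter]

lemma pr_zero_of_not_mem (p : Ω → ℝ) (Z : Ω → α) {z : α}
    (h : z ∉ Finset.univ.image Z) : pr p Z z = 0 := by
  rw [pr_eq_sum_ite]
  refine Finset.sum_eq_zero fun ω _ => ?_
  rw [if_neg]
  intro hz
  exact h (by simpa [hz.symm] using Finset.mem_image_of_mem Z (Finset.mem_univ ω))

lemma ent_eq_sum_superset (p : Ω → ℝ) (Z : Ω → α) {A : Finset α}
    (h : Finset.univ.image Z ⊆ A) :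
    ent p Z = -∑ z ∈ A, pr p Z z * Real.logb 2 (pr p Z z) := by
  rw [ent]
  congr 1
  refine Finset.sum_subset h fun z _ hz => ?_
  rw [pr_zero_of_not_mem p Z hz, zero_mul]

lemma pr_comp_superset (p : Ω → ℝ) (Z : Ω → α) {A : Finset α}
    (h : Finset.univ.image Z ⊆ A) (Φ : α → β) (u : β) :
    pr p (fun ω => Φ (Z ω)) u = ∑ v ∈ A, if Φ v = u then pr p Z v else 0 := by
  rw [pr_eq_sum_ite]
  have key : ∀ ω : Ω, (if Φ (Z ω) = u then p ω else 0)
      = ∑ v ∈ A, if Z ω = v then (if Φ v = u then p ω else 0) else 0 := by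
    intro ω
    rw [Finset.sum_ite_eq A (Z ω) (fun v => if Φ v = u then p ω else 0)]
    rw [if_pos (h (Finset.mem_image_of_mem Z (Finset.mem_univ ω)))]
  rw [Finset.sum_congr rfl fun ω _ => key ω, Finset.sum_comm]
  refine Finset.sum_congr rfl fun v _ => ?_
  by_cases hv : Φ v = u
  · simp only [hv, if_true, pr_eq_sum_ite]
  · simp only [hv, if_false, ite_self, Finset.sum_const_zero]

lemma pr_comp_congr {p : Ω → ℝ} {Z : Ω → α} {p' : Ω' → ℝ} {Z' : Ω' → α}
    (h : ∀ v, pr p Z v = pr p' Z' v) (Φ : α → β) (u : β) :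
    pr p (fun ω => Φ (Z ω)) u = pr p' (fun ω => Φ (Z' ω)) u := by
  rw [pr_comp_superset p Z (A := Finset.univ.image Z ∪ Finset.univ.image Z')
    Finset.subset_union_left Φ u,
    pr_comp_superset p' Z' (A := Finset.univ.image Z ∪ Finset.univ.image Z')
    Finset.subset_union_right Φ u]
  exact Finset.sum_congr rfl fun v _ => by rw [h v]

lemma ent_congr {p : Ω → ℝ} {Z : Ω → α} {p' : Ω' → ℝ} {Z' : Ω' → α}
    (h : ∀ v, pr p Z v = pr p' Z' v) : ent p Z = ent p' Z' := by
  rw [ent_eq_sum_superset p Z (A := Finset.univ.image Z ∪ Finset.univ.image Z')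
    Finset.subset_union_left,
    ent_eq_sum_superset p' Z' (A := Finset.univ.image Z ∪ Finset.univ.image Z')
    Finset.subset_union_right]
  congr 1
  exact Finset.sum_congr rfl fun v _ => by rw [h v]

lemma ent_comp_congr {p : Ω → ℝ} {Z : Ω → α} {p' : Ω' → ℝ} {Z' : Ω' → α}
    (h : ∀ v, pr p Z v = pr p' Z' v) (Φ : α → β) :
    ent p (fun ω => Φ (Z ω)) = ent p' (fun ω => Φ (Z' ω)) :=
  ent_congr (fun u => pr_comp_congr h Φ u)

lemma condMutInfo_comp_congr {γ δ ε : Type*} [DecidableEq γ] [DecidableEq δ] [DecidableEq ε]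
    {p : Ω → ℝ} {Z : Ω → α} {p' : Ω' → ℝ} {Z' : Ω' → α}
    (h : ∀ v, pr p Z v = pr p' Z' v)
    (ΦA : α → γ) (ΦB : α → δ) (ΦC : α → ε) :
    condMutInfo p (fun ω => ΦA (Z ω)) (fun ω => ΦB (Z ω)) (fun ω => ΦC (Z ω))
      = condMutInfo p' (fun ω => ΦA (Z' ω)) (fun ω => ΦB (Z' ω)) (fun ω => ΦC (Z' ω)) := by
  unfold condMutInfo
  rw [ent_comp_congr h (fun v => (ΦA v, ΦC v)),
    ent_comp_congr h (fun v => (ΦB v, ΦC v)),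
    ent_comp_congr h (fun v => (ΦA v, ΦB v, ΦC v)),
    ent_comp_congr h ΦC]

end PrEnt


section SnocLemmas

variable {mx my ms : ℕ}

lemma snoc_mk_lt {n : ℕ} {β : Type*} (f : Fin n → β) (b : β) {i : ℕ} (h : i < n)
    (h' : i < n + 1) : (Fin.snoc f b : Fin (n + 1) → β) ⟨i, h'⟩ = f ⟨i, h⟩ := by
  have : (⟨i, h'⟩ : Fin (n + 1)) = Fin.castSucc ⟨i, h⟩ := rfl
  rw [this, Fin.snoc_castSucc]

lemma snoc_mk_last {n : ℕ} {β : Type*} (f : Fin n → β) (b : β) (h' : n < n + 1) :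
    (Fin.snoc f b : Fin (n + 1) → β) ⟨n, h'⟩ = b := by
  have : (⟨n, h'⟩ : Fin (n + 1)) = Fin.last n := rfl
  rw [this, Fin.snoc_last]

lemma snoc_eq_iff' {n : ℕ} {β : Type*} {f : Fin n → β} {b : β} {g : Fin (n + 1) → β} :
    Fin.snoc f b = g ↔ f = (fun i => g i.castSucc) ∧ b = g (Fin.last n) := by
  constructor
  · rintro rfl
    exact ⟨by funext i; rw [Fin.snoc_castSucc], by rw [Fin.snoc_last]⟩
  · rintro ⟨rfl, rfl⟩
    funext i
    refine Fin.lastCases ?_ (fun j => ?_) i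
    · rw [Fin.snoc_last]
    · rw [Fin.snoc_castSucc]

lemma sum_pi_snoc {n : ℕ} {β : Type*} [Fintype β] (F : (Fin (n + 1) → β) → ℝ) :
    ∑ g : Fin (n + 1) → β, F g = ∑ f : Fin n → β, ∑ b : β, F (Fin.snoc f b) := by
  rw [← Equiv.sum_comp (Fin.snocEquiv (fun _ => β)) F, Fintype.sum_prod_type]
  rw [Finset.sum_comm]
  refine Finset.sum_congr rfl fun f _ => Finset.sum_congr rfl fun b _ => ?_
  congr 1

/-- Append one step to a trajectory. -/
def snocT {n : ℕ} (ω : Traj mx my ms n) (xl : Fin (mx + 1)) (yl : Fin (my + 1)) :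
    Traj mx my ms (n + 1) :=
  (ω.1, Fin.snoc ω.2.1 xl, Fin.snoc ω.2.2 yl)

lemma sum_traj_succ {n : ℕ} (F : Traj mx my ms (n + 1) → ℝ) :
    ∑ ω, F ω = ∑ ω₀ : Traj mx my ms n, ∑ xl : Fin (mx + 1), ∑ yl : Fin (my + 1),
      F (snocT ω₀ xl yl) := by
  simp only [Fintype.sum_prod_type]
  refine Finset.sum_congr rfl fun s1 _ => ?_
  rw [sum_pi_snoc (fun x => ∑ y : Fin (n+1) → Fin (my+1), F (s1, x, y))]
  refine Finset.sum_congr rfl fun x _ => ?_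
  have key : ∀ xl : Fin (mx + 1),
      ∑ y : Fin (n+1) → Fin (my+1), F (s1, Fin.snoc x xl, y)
        = ∑ y₀ : Fin n → Fin (my+1), ∑ yl : Fin (my+1), F (s1, Fin.snoc x xl, Fin.snoc y₀ yl) :=
    fun xl => sum_pi_snoc _
  rw [Finset.sum_congr rfl fun xl _ => key xl, Finset.sum_comm]
  rfl

lemma Xat_snoc_lt {n : ℕ} (ω : Traj mx my ms n) (xl : Fin (mx + 1)) (yl : Fin (my + 1))
    {i : ℕ} (h : i < n) : Xat (snocT ω xl yl) i = Xat ω i := by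
  rw [Xat, Xat, dif_pos (Nat.lt_succ_of_lt h), dif_pos h]
  simp only [snocT]
  rw [snoc_mk_lt ω.2.1 xl h]

lemma Yat_snoc_lt {n : ℕ} (ω : Traj mx my ms n) (xl : Fin (mx + 1)) (yl : Fin (my + 1))
    {i : ℕ} (h : i < n) : Yat (snocT ω xl yl) i = Yat ω i := by
  rw [Yat, Yat, dif_pos (Nat.lt_succ_of_lt h), dif_pos h]
  simp only [snocT]
  rw [snoc_mk_lt ω.2.2 yl h]

lemma Xat_snoc_last {n : ℕ} (ω : Traj mx my ms n) (xl : Fin (mx + 1)) (yl : Fin (my + 1)) :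
    Xat (snocT ω xl yl) n = ((xl : ℕ) : ℤ) := by
  rw [Xat, dif_pos (Nat.lt_succ_self n)]
  simp only [snocT]
  rw [snoc_mk_last ω.2.1 xl]

lemma Yat_snoc_last {n : ℕ} (ω : Traj mx my ms n) (xl : Fin (mx + 1)) (yl : Fin (my + 1)) :
    Yat (snocT ω xl yl) n = ((yl : ℕ) : ℤ) := by
  rw [Yat, dif_pos (Nat.lt_succ_self n)]
  simp only [snocT]
  rw [snoc_mk_last ω.2.2 yl]

lemma Sat_snoc {n : ℕ} (ω : Traj mx my ms n) (xl : Fin (mx + 1)) (yl : Fin (my + 1))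
    {k : ℕ} (h : k ≤ n) : Sat (snocT ω xl yl) k = Sat ω k := by
  rw [Sat, Sat, snocT]
  congr 1
  refine Finset.sum_congr rfl fun i hi => ?_
  have hin : i < n := lt_of_lt_of_le (Finset.mem_range.mp hi) h
  rw [show ((ω.1, Fin.snoc ω.2.1 xl, Fin.snoc ω.2.2 yl) : Traj mx my ms (n+1)) = snocT ω xl yl from rfl,
    Xat_snoc_lt ω xl yl hin, Yat_snoc_lt ω xl yl hin]

lemma Sat_succ {T : ℕ} (ω : Traj mx my ms T) (k : ℕ) :
    Sat ω (k + 1) = Sat ω k + (Yat ω k - Xat ω k) := by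
  rw [Sat, Sat, Finset.sum_range_succ, add_assoc]

end SnocLemmas


section JointLemmas

variable {mx my ms : ℕ}

/-- One-step Markov weight for appending `xl` after `x : Fin n → 𝒳`. -/
noncomputable def mstep (PX1 : Fin (mx + 1) → ℝ) (Qm : Fin (mx + 1) → Fin (mx + 1) → ℝ)
    (n : ℕ) (x : Fin n → Fin (mx + 1)) (xl : Fin (mx + 1)) : ℝ :=
  if _h : n = 0 then PX1 xl else Qm (x ⟨n - 1, by omega⟩) xl

lemma sum_mstep {PX1 : Fin (mx + 1) → ℝ} (hPX1 : IsPMF PX1)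
    {Qm : Fin (mx + 1) → Fin (mx + 1) → ℝ} (hQm : ∀ x, IsPMF (Qm x))
    (n : ℕ) (x : Fin n → Fin (mx + 1)) : ∑ xl, mstep PX1 Qm n x xl = 1 := by
  unfold mstep
  split
  · exact hPX1.2
  · exact (hQm _).2

lemma mstep_nonneg {PX1 : Fin (mx + 1) → ℝ} (hPX1 : IsPMF PX1)
    {Qm : Fin (mx + 1) → Fin (mx + 1) → ℝ} (hQm : ∀ x, IsPMF (Qm x))
    (n : ℕ) (x : Fin n → Fin (mx + 1)) (xl : Fin (mx + 1)) : 0 ≤ mstep PX1 Qm n x xl := by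
  unfold mstep
  split
  · exact hPX1.1 xl
  · exact (hQm _).1 xl

lemma markovWt_snoc (PX1 : Fin (mx + 1) → ℝ) (Qm : Fin (mx + 1) → Fin (mx + 1) → ℝ)
    {n : ℕ} (x : Fin n → Fin (mx + 1)) (xl : Fin (mx + 1)) :
    markovWt PX1 Qm (Fin.snoc x xl : Fin (n + 1) → Fin (mx + 1))
      = markovWt PX1 Qm x * mstep PX1 Qm n x xl := by
  rw [markovWt, Fin.prod_univ_castSucc, markovWt, mstep]
  congr 1
  · refine Finset.prod_congr rfl fun t _ => ?_
    show (if _h : (t : ℕ) = 0 then PX1 ((Fin.snoc x xl : Fin (n + 1) → Fin (mx + 1)) t.castSucc)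
        else Qm ((Fin.snoc x xl : Fin (n + 1) → Fin (mx + 1)) ⟨(t : ℕ) - 1, by omega⟩)
          ((Fin.snoc x xl : Fin (n + 1) → Fin (mx + 1)) t.castSucc))
      = if _h : (t : ℕ) = 0 then PX1 (x t) else Qm (x ⟨(t : ℕ) - 1, by omega⟩) (x t)
    by_cases h0 : (t : ℕ) = 0
    · rw [dif_pos h0, dif_pos h0, Fin.snoc_castSucc]
    · rw [dif_neg h0, dif_neg h0, Fin.snoc_castSucc]
      congr 1
      exact snoc_mk_lt x xl (by omega) _
  · show (if _h : n = 0 then PX1 ((Fin.snoc x xl : Fin (n + 1) → Fin (mx + 1)) (Fin.last n))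
        else Qm ((Fin.snoc x xl : Fin (n + 1) → Fin (mx + 1)) ⟨n - 1, by omega⟩)
          ((Fin.snoc x xl : Fin (n + 1) → Fin (mx + 1)) (Fin.last n)))
      = if _h : n = 0 then PX1 xl else Qm (x ⟨n - 1, by omega⟩) xl
    by_cases hn : n = 0
    · rw [dif_pos hn, dif_pos hn, Fin.snoc_last]
    · rw [dif_neg hn, dif_neg hn, Fin.snoc_last]
      congr 1
      exact snoc_mk_lt x xl (by omega) _

lemma markovWt_nonneg {PX1 : Fin (mx + 1) → ℝ} (hPX1 : IsPMF PX1)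
    {Qm : Fin (mx + 1) → Fin (mx + 1) → ℝ} (hQm : ∀ x, IsPMF (Qm x))
    {n : ℕ} (x : Fin n → Fin (mx + 1)) : 0 ≤ markovWt PX1 Qm x := by
  refine Finset.prod_nonneg fun t _ => ?_
  split
  · exact hPX1.1 _
  · exact (hQm _).1 _

lemma prefX_snoc_castSucc {n : ℕ} (ω : Traj mx my ms n) (xl : Fin (mx + 1))
    (yl : Fin (my + 1)) (t : Fin n) :
    prefX (snocT ω xl yl) t.castSucc = prefX ω t := by
  funext i
  simp only [prefX, snocT]
  exact snoc_mk_lt _ _ (lt_of_le_of_lt (Nat.lt_succ_iff.mp i.isLt) t.isLt) _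

lemma prefY_snoc_castSucc {n : ℕ} (ω : Traj mx my ms n) (xl : Fin (mx + 1))
    (yl : Fin (my + 1)) (t : Fin n) :
    prefY (snocT ω xl yl) t.castSucc = prefY ω t := by
  funext i
  simp only [prefY, snocT]
  exact snoc_mk_lt _ _ (i.isLt.trans t.isLt) _

lemma prefX_snoc_last {n : ℕ} (ω : Traj mx my ms n) (xl : Fin (mx + 1))
    (yl : Fin (my + 1)) :
    prefX (snocT ω xl yl) (Fin.last n) = Fin.snoc ω.2.1 xl := by
  funext i
  rfl

lemma prefY_snoc_last {n : ℕ} (ω : Traj mx my ms n) (xl : Fin (mx + 1))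
    (yl : Fin (my + 1)) :
    prefY (snocT ω xl yl) (Fin.last n) = ω.2.2 := by
  funext i
  simp only [prefY, snocT]
  exact snoc_mk_lt _ _ i.isLt _

lemma jointA_snoc (PS1 : Fin (ms + 1) → ℝ) (PX1 : Fin (mx + 1) → ℝ)
    (Qm : Fin (mx + 1) → Fin (mx + 1) → ℝ) (qa : PolicyA mx my ms) {n : ℕ}
    (ω : Traj mx my ms n) (xl : Fin (mx + 1)) (yl : Fin (my + 1)) :
    jointAMarkov PS1 PX1 Qm qa (n + 1) (snocT ω xl yl)
      = jointAMarkov PS1 PX1 Qm qa n ω * mstep PX1 Qm n ω.2.1 xl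
        * qa n (Fin.snoc ω.2.1 xl) ω.1 ω.2.2 yl := by
  show PS1 ω.1 * markovWt PX1 Qm (Fin.snoc ω.2.1 xl) *
      ∏ t : Fin (n + 1), qa (t : ℕ) (prefX (snocT ω xl yl) t) ω.1
        (prefY (snocT ω xl yl) t) ((Fin.snoc ω.2.2 yl : Fin (n + 1) → Fin (my + 1)) t) = _
  rw [markovWt_snoc, Fin.prod_univ_castSucc, prefX_snoc_last, prefY_snoc_last, Fin.snoc_last]
  have hfac : ∀ t : Fin n,
      qa ((t.castSucc : Fin (n + 1)) : ℕ) (prefX (snocT ω xl yl) t.castSucc) ω.1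
        (prefY (snocT ω xl yl) t.castSucc)
        ((Fin.snoc ω.2.2 yl : Fin (n + 1) → Fin (my + 1)) t.castSucc)
      = qa (t : ℕ) (prefX ω t) ω.1 (prefY ω t) (ω.2.2 t) := by
    intro t
    rw [prefX_snoc_castSucc, prefY_snoc_castSucc, Fin.snoc_castSucc]
    rfl
  rw [Finset.prod_congr rfl fun t _ => hfac t, jointAMarkov,
    show qa ((Fin.last n : Fin (n + 1)) : ℕ) (Fin.snoc ω.2.1 xl) ω.1 ω.2.2 yl
      = qa n (Fin.snoc ω.2.1 xl) ω.1 ω.2.2 yl from rfl]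
  ring

lemma jointB_snoc (PS1 : Fin (ms + 1) → ℝ) (PX1 : Fin (mx + 1) → ℝ)
    (Qm : Fin (mx + 1) → Fin (mx + 1) → ℝ) (qb : PolicyB mx my ms) {n : ℕ}
    (ω : Traj mx my ms n) (xl : Fin (mx + 1)) (yl : Fin (my + 1)) :
    jointBMarkov PS1 PX1 Qm qb (n + 1) (snocT ω xl yl)
      = jointBMarkov PS1 PX1 Qm qb n ω * mstep PX1 Qm n ω.2.1 xl
        * qb n xl (Sat ω n) ω.2.2 yl := by
  show PS1 ω.1 * markovWt PX1 Qm (Fin.snoc ω.2.1 xl) *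
      ∏ t : Fin (n + 1), qb (t : ℕ) ((Fin.snoc ω.2.1 xl : Fin (n + 1) → Fin (mx + 1)) t)
        (Sat (snocT ω xl yl) (t : ℕ)) (prefY (snocT ω xl yl) t)
        ((Fin.snoc ω.2.2 yl : Fin (n + 1) → Fin (my + 1)) t) = _
  rw [Fin.prod_univ_castSucc, markovWt_snoc, Fin.snoc_last, Fin.snoc_last, prefY_snoc_last,
    show Sat (snocT ω xl yl) ((Fin.last n : Fin (n + 1)) : ℕ) = Sat ω n
      from Sat_snoc ω xl yl le_rfl,
    show qb ((Fin.last n : Fin (n + 1)) : ℕ) xl (Sat ω n) ω.2.2 yl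
      = qb n xl (Sat ω n) ω.2.2 yl from rfl]
  have hfac : ∀ t : Fin n,
      qb ((t.castSucc : Fin (n + 1)) : ℕ)
        ((Fin.snoc ω.2.1 xl : Fin (n + 1) → Fin (mx + 1)) t.castSucc)
        (Sat (snocT ω xl yl) ((t.castSucc : Fin (n + 1)) : ℕ)) (prefY (snocT ω xl yl) t.castSucc)
        ((Fin.snoc ω.2.2 yl : Fin (n + 1) → Fin (my + 1)) t.castSucc)
      = qb (t : ℕ) (ω.2.1 t) (Sat ω (t : ℕ)) (prefY ω t) (ω.2.2 t) := by
    intro t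
    rw [prefY_snoc_castSucc, Fin.snoc_castSucc, Fin.snoc_castSucc]
    have : Sat (snocT ω xl yl) ((t.castSucc : Fin (n + 1)) : ℕ) = Sat ω (t : ℕ) :=
      Sat_snoc ω xl yl (le_of_lt t.isLt)
    rw [this]
    rfl
  rw [Finset.prod_congr rfl fun t _ => hfac t, jointBMarkov]
  ring

lemma jointA_nonneg {PS1 : Fin (ms + 1) → ℝ} (hPS1 : IsPMF PS1)
    {PX1 : Fin (mx + 1) → ℝ} (hPX1 : IsPMF PX1)
    {Qm : Fin (mx + 1) → Fin (mx + 1) → ℝ} (hQm : ∀ x, IsPMF (Qm x))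
    {qa : PolicyA mx my ms} (hqa : CondPMFA qa) (n : ℕ) (ω : Traj mx my ms n) :
    0 ≤ jointAMarkov PS1 PX1 Qm qa n ω :=
  mul_nonneg (mul_nonneg (hPS1.1 _) (markovWt_nonneg hPX1 hQm _))
    (Finset.prod_nonneg fun t _ => (hqa _ _ _ _).1 _)

lemma jointB_nonneg {PS1 : Fin (ms + 1) → ℝ} (hPS1 : IsPMF PS1)
    {PX1 : Fin (mx + 1) → ℝ} (hPX1 : IsPMF PX1)
    {Qm : Fin (mx + 1) → Fin (mx + 1) → ℝ} (hQm : ∀ x, IsPMF (Qm x))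
    {qb : PolicyB mx my ms} (hqb : CondPMFB qb) (n : ℕ) (ω : Traj mx my ms n) :
    0 ≤ jointBMarkov PS1 PX1 Qm qb n ω :=
  mul_nonneg (mul_nonneg (hPS1.1 _) (markovWt_nonneg hPX1 hQm _))
    (Finset.prod_nonneg fun t _ => (hqb _ _ _ _).1 _)

/-- The statistic `(X_t, S_t, Y^t)`. -/
def statT (mx my ms T : ℕ) (t : ℕ) (ω : Traj mx my ms T) : ℤ × ℤ × (Fin (t + 1) → ℤ) :=
  (Xat ω t, Sat ω t, fun i : Fin (t + 1) => Yat ω (i : ℕ))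

lemma Xat_coord {n : ℕ} (ω : Traj mx my ms n) {i : ℕ} (h : i < n) :
    Xat ω i = ((ω.2.1 ⟨i, h⟩ : ℕ) : ℤ) := by
  rw [Xat, dif_pos h]

lemma Yat_coord {n : ℕ} (ω : Traj mx my ms n) {i : ℕ} (h : i < n) :
    Yat ω i = ((ω.2.2 ⟨i, h⟩ : ℕ) : ℤ) := by
  rw [Yat, dif_pos h]

lemma statT_snoc {t : ℕ} (ω₀ : Traj mx my ms t) (xl : Fin (mx + 1)) (yl : Fin (my + 1)) :
    statT mx my ms (t + 1) t (snocT ω₀ xl yl)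
      = (((xl : ℕ) : ℤ), Sat ω₀ t,
          Fin.snoc (fun j : Fin t => ((ω₀.2.2 j : ℕ) : ℤ)) ((yl : ℕ) : ℤ)) := by
  unfold statT
  refine congrArg₂ Prod.mk (Xat_snoc_last ω₀ xl yl)
    (congrArg₂ Prod.mk (Sat_snoc ω₀ xl yl le_rfl) ?_)
  funext i
  refine Fin.lastCases ?_ (fun j => ?_) i
  · rw [Fin.snoc_last]
    exact Yat_snoc_last ω₀ xl yl
  · rw [Fin.snoc_castSucc]
    rw [show ((j.castSucc : Fin (t + 1)) : ℕ) = (j : ℕ) from rfl]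
    rw [Yat_snoc_lt ω₀ xl yl j.isLt, Yat_coord ω₀ j.isLt]

end JointLemmas


section Construction

variable {mx my ms : ℕ}

lemma sum_ite_eq_and {β : Type*} [Fintype β] (b : β) (P : β → Prop)
    (f : β → ℝ) [∀ b', Decidable (b' = b ∧ P b')] [Decidable (P b)] :
    ∑ b' : β, (if b' = b ∧ P b' then f b' else 0) = if P b then f b else 0 := by
  rw [Finset.sum_eq_single b]
  · by_cases hP : P b
    · rw [if_pos ⟨rfl, hP⟩, if_pos hP]
    · rw [if_neg (fun hc => hP hc.2), if_neg hP]
  · intro b' _ hb'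
    exact if_neg (fun hc => hb' hc.1)
  · intro hb
    exact absurd (Finset.mem_univ b) hb

lemma fin_coe_inj {k : ℕ} {a b : Fin k} (h : ((a : ℕ) : ℤ) = ((b : ℕ) : ℤ)) : a = b :=
  Fin.ext (by exact_mod_cast h)

/-- Integer coercion of a `𝒴`-valued history. -/
def coeY {my : ℕ} {t : ℕ} (y : Fin t → Fin (my + 1)) : Fin t → ℤ :=
  fun i => ((y i : ℕ) : ℤ)

variable (PS1 : Fin (ms + 1) → ℝ) (PX1 : Fin (mx + 1) → ℝ)
  (Qm : Fin (mx + 1) → Fin (mx + 1) → ℝ)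

/-- Pmf of `(X_t, S_t, Y^t)` at horizon `t + 1` under the class-`Q_A` policy `qa`. -/
noncomputable def FA (qa : PolicyA mx my ms) (t : ℕ) (v : ℤ × ℤ × (Fin (t + 1) → ℤ)) : ℝ :=
  pr (jointAMarkov PS1 PX1 Qm qa (t + 1)) (statT mx my ms (t + 1) t) v

/-- Pmf of `(X_t, S_t, Y^t)` at horizon `t + 1` under the class-`Q_B` policy `qb`. -/
noncomputable def FB (qb : PolicyB mx my ms) (t : ℕ) (v : ℤ × ℤ × (Fin (t + 1) → ℤ)) : ℝ :=
  pr (jointBMarkov PS1 PX1 Qm qb (t + 1)) (statT mx my ms (t + 1) t) v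

/-- Pmf of `(X_t, S_t, Y^{t-1})` at horizon `t + 1` under `qa`. -/
noncomputable def GA (qa : PolicyA mx my ms) (t : ℕ) (x : Fin (mx + 1)) (s : ℤ)
    (y : Fin t → Fin (my + 1)) : ℝ :=
  ∑ yl : Fin (my + 1), FA PS1 PX1 Qm qa t (((x : ℕ) : ℤ), s, Fin.snoc (coeY y) ((yl : ℕ) : ℤ))

/-- The class-`Q_B` policy obtained from `qa` by conditioning. -/
noncomputable def qbOf (qa : PolicyA mx my ms) : PolicyB mx my ms := fun t x s y yl =>
  if GA PS1 PX1 Qm qa t x s y = 0 then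
    (if yl = ⟨(x : ℕ) % (my + 1), Nat.mod_lt _ (Nat.succ_pos my)⟩ then 1 else 0)
  else FA PS1 PX1 Qm qa t (((x : ℕ) : ℤ), s, Fin.snoc (coeY y) ((yl : ℕ) : ℤ))
    / GA PS1 PX1 Qm qa t x s y

/-- Pmf of `(X_t, S_t, Y^{t-1})` under `qa` (computed at horizon `t`). -/
noncomputable def KA (qa : PolicyA mx my ms) (t : ℕ) (x : Fin (mx + 1)) (s : ℤ)
    (y : Fin t → Fin (my + 1)) : ℝ :=
  ∑ ω₀ : Traj mx my ms t, if Sat ω₀ t = s ∧ ω₀.2.2 = y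
    then jointAMarkov PS1 PX1 Qm qa t ω₀ * mstep PX1 Qm t ω₀.2.1 x else 0

/-- Pmf of `(X_t, S_t, Y^{t-1})` under `qb` (computed at horizon `t`). -/
noncomputable def KB (qb : PolicyB mx my ms) (t : ℕ) (x : Fin (mx + 1)) (s : ℤ)
    (y : Fin t → Fin (my + 1)) : ℝ :=
  ∑ ω₀ : Traj mx my ms t, if Sat ω₀ t = s ∧ ω₀.2.2 = y
    then jointBMarkov PS1 PX1 Qm qb t ω₀ * mstep PX1 Qm t ω₀.2.1 x else 0

variable {PS1 PX1 Qm}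

lemma cond_iff {t : ℕ} (ω₀ : Traj mx my ms t) (xl x : Fin (mx + 1)) (yl' yl : Fin (my + 1))
    (s : ℤ) (y : Fin t → Fin (my + 1)) :
    ((((xl : ℕ) : ℤ), Sat ω₀ t, Fin.snoc (coeY ω₀.2.2) ((yl' : ℕ) : ℤ))
        = ((((x : ℕ) : ℤ), s, Fin.snoc (coeY y) ((yl : ℕ) : ℤ)) : ℤ × ℤ × (Fin (t + 1) → ℤ)))
      ↔ (yl' = yl ∧ xl = x ∧ Sat ω₀ t = s ∧ ω₀.2.2 = y) := by
  constructor
  · intro h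
    obtain ⟨h1, h2, h3⟩ : ((xl : ℕ) : ℤ) = ((x : ℕ) : ℤ) ∧ Sat ω₀ t = s ∧
        Fin.snoc (coeY ω₀.2.2) ((yl' : ℕ) : ℤ)
          = (Fin.snoc (coeY y) ((yl : ℕ) : ℤ) : Fin (t + 1) → ℤ) := by
      refine ⟨congrArg Prod.fst h, ?_, ?_⟩
      · exact congrArg (fun p => p.2.1) h
      · exact congrArg (fun p => p.2.2) h
    have hlast := congrFun h3 (Fin.last t)
    rw [Fin.snoc_last, Fin.snoc_last] at hlast
    refine ⟨fin_coe_inj hlast, fin_coe_inj h1, h2, ?_⟩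
    funext i
    have hi := congrFun h3 i.castSucc
    rw [Fin.snoc_castSucc, Fin.snoc_castSucc] at hi
    exact fin_coe_inj hi
  · rintro ⟨rfl, rfl, rfl, rfl⟩
    rfl

lemma FA_split (qa : PolicyA mx my ms) (t : ℕ) (v : ℤ × ℤ × (Fin (t + 1) → ℤ)) :
    FA PS1 PX1 Qm qa t v
      = ∑ ω₀ : Traj mx my ms t, ∑ xl : Fin (mx + 1), ∑ yl : Fin (my + 1),
          if ((((xl : ℕ) : ℤ), Sat ω₀ t, Fin.snoc (coeY ω₀.2.2) ((yl : ℕ) : ℤ))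
              : ℤ × ℤ × (Fin (t + 1) → ℤ)) = v
          then jointAMarkov PS1 PX1 Qm qa t ω₀ * mstep PX1 Qm t ω₀.2.1 xl
            * qa t (Fin.snoc ω₀.2.1 xl) ω₀.1 ω₀.2.2 yl
          else 0 := by
  rw [FA, pr_eq_sum_ite,
    sum_traj_succ (fun ω => if statT mx my ms (t+1) t ω = v
      then jointAMarkov PS1 PX1 Qm qa (t+1) ω else 0)]
  refine Finset.sum_congr rfl fun ω₀ _ => Finset.sum_congr rfl fun xl _ =>
    Finset.sum_congr rfl fun yl _ => ?_
  rw [statT_snoc, jointA_snoc]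
  rfl

lemma FB_split (qb : PolicyB mx my ms) (t : ℕ) (v : ℤ × ℤ × (Fin (t + 1) → ℤ)) :
    FB PS1 PX1 Qm qb t v
      = ∑ ω₀ : Traj mx my ms t, ∑ xl : Fin (mx + 1), ∑ yl : Fin (my + 1),
          if ((((xl : ℕ) : ℤ), Sat ω₀ t, Fin.snoc (coeY ω₀.2.2) ((yl : ℕ) : ℤ))
              : ℤ × ℤ × (Fin (t + 1) → ℤ)) = v
          then jointBMarkov PS1 PX1 Qm qb t ω₀ * mstep PX1 Qm t ω₀.2.1 xl
            * qb t xl (Sat ω₀ t) ω₀.2.2 yl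
          else 0 := by
  rw [FB, pr_eq_sum_ite,
    sum_traj_succ (fun ω => if statT mx my ms (t+1) t ω = v
      then jointBMarkov PS1 PX1 Qm qb (t+1) ω else 0)]
  refine Finset.sum_congr rfl fun ω₀ _ => Finset.sum_congr rfl fun xl _ =>
    Finset.sum_congr rfl fun yl _ => ?_
  rw [statT_snoc, jointB_snoc]
  rfl

lemma statT_snoc_lt {n t : ℕ} (h : t < n) (ω₀ : Traj mx my ms n) (xl : Fin (mx + 1))
    (yl : Fin (my + 1)) :
    statT mx my ms (n + 1) t (snocT ω₀ xl yl) = statT mx my ms n t ω₀ := by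
  unfold statT
  refine congrArg₂ Prod.mk (Xat_snoc_lt ω₀ xl yl h)
    (congrArg₂ Prod.mk (Sat_snoc ω₀ xl yl h.le) ?_)
  funext i
  exact Yat_snoc_lt ω₀ xl yl (lt_of_le_of_lt (Nat.lt_succ_iff.mp i.isLt) h)

lemma margA (hPX1 : IsPMF PX1) (hQm : ∀ x, IsPMF (Qm x)) {qa : PolicyA mx my ms}
    (hqa : CondPMFA qa) {T t : ℕ} (ht : t < T) (v : ℤ × ℤ × (Fin (t + 1) → ℤ)) :
    pr (jointAMarkov PS1 PX1 Qm qa T) (statT mx my ms T t) v = FA PS1 PX1 Qm qa t v := by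
  induction T, ht using Nat.le_induction with
  | base => rfl
  | succ n hn ih =>
    rw [pr_eq_sum_ite,
      sum_traj_succ (fun ω => if statT mx my ms (n+1) t ω = v
        then jointAMarkov PS1 PX1 Qm qa (n+1) ω else 0), ← ih, pr_eq_sum_ite]
    refine Finset.sum_congr rfl fun ω₀ _ => ?_
    have step : ∀ xl : Fin (mx + 1), ∑ yl : Fin (my + 1),
        (if statT mx my ms (n+1) t (snocT ω₀ xl yl) = v
          then jointAMarkov PS1 PX1 Qm qa (n+1) (snocT ω₀ xl yl) else 0)
        = if statT mx my ms n t ω₀ = v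
          then jointAMarkov PS1 PX1 Qm qa n ω₀ * mstep PX1 Qm n ω₀.2.1 xl else 0 := by
      intro xl
      have hre : ∀ yl : Fin (my + 1),
          (if statT mx my ms (n+1) t (snocT ω₀ xl yl) = v
            then jointAMarkov PS1 PX1 Qm qa (n+1) (snocT ω₀ xl yl) else 0)
          = if statT mx my ms n t ω₀ = v
            then jointAMarkov PS1 PX1 Qm qa n ω₀ * mstep PX1 Qm n ω₀.2.1 xl
              * qa n (Fin.snoc ω₀.2.1 xl) ω₀.1 ω₀.2.2 yl else 0 := by
        intro yl
        rw [statT_snoc_lt (Nat.lt_of_succ_le hn) ω₀ xl yl, jointA_snoc]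
      rw [Finset.sum_congr rfl fun yl _ => hre yl]
      by_cases hc : statT mx my ms n t ω₀ = v
      · simp only [if_pos hc]
        rw [← Finset.mul_sum, (hqa n (Fin.snoc ω₀.2.1 xl) ω₀.1 ω₀.2.2).2, mul_one]
      · simp only [if_neg hc, Finset.sum_const_zero]
    rw [Finset.sum_congr rfl fun xl _ => step xl]
    by_cases hc : statT mx my ms n t ω₀ = v
    · simp only [if_pos hc]
      rw [← Finset.mul_sum, sum_mstep hPX1 hQm, mul_one]
    · simp only [if_neg hc, Finset.sum_const_zero]

lemma margB (hPX1 : IsPMF PX1) (hQm : ∀ x, IsPMF (Qm x)) {qb : PolicyB mx my ms}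
    (hqb : CondPMFB qb) {T t : ℕ} (ht : t < T) (v : ℤ × ℤ × (Fin (t + 1) → ℤ)) :
    pr (jointBMarkov PS1 PX1 Qm qb T) (statT mx my ms T t) v = FB PS1 PX1 Qm qb t v := by
  induction T, ht using Nat.le_induction with
  | base => rfl
  | succ n hn ih =>
    rw [pr_eq_sum_ite,
      sum_traj_succ (fun ω => if statT mx my ms (n+1) t ω = v
        then jointBMarkov PS1 PX1 Qm qb (n+1) ω else 0), ← ih, pr_eq_sum_ite]
    refine Finset.sum_congr rfl fun ω₀ _ => ?_
    have step : ∀ xl : Fin (mx + 1), ∑ yl : Fin (my + 1),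
        (if statT mx my ms (n+1) t (snocT ω₀ xl yl) = v
          then jointBMarkov PS1 PX1 Qm qb (n+1) (snocT ω₀ xl yl) else 0)
        = if statT mx my ms n t ω₀ = v
          then jointBMarkov PS1 PX1 Qm qb n ω₀ * mstep PX1 Qm n ω₀.2.1 xl else 0 := by
      intro xl
      have hre : ∀ yl : Fin (my + 1),
          (if statT mx my ms (n+1) t (snocT ω₀ xl yl) = v
            then jointBMarkov PS1 PX1 Qm qb (n+1) (snocT ω₀ xl yl) else 0)
          = if statT mx my ms n t ω₀ = v
            then jointBMarkov PS1 PX1 Qm qb n ω₀ * mstep PX1 Qm n ω₀.2.1 xl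
              * qb n xl (Sat ω₀ n) ω₀.2.2 yl else 0 := by
        intro yl
        rw [statT_snoc_lt (Nat.lt_of_succ_le hn) ω₀ xl yl, jointB_snoc]
      rw [Finset.sum_congr rfl fun yl _ => hre yl]
      by_cases hc : statT mx my ms n t ω₀ = v
      · simp only [if_pos hc]
        rw [← Finset.mul_sum, (hqb n xl (Sat ω₀ n) ω₀.2.2).2, mul_one]
      · simp only [if_neg hc, Finset.sum_const_zero]
    rw [Finset.sum_congr rfl fun xl _ => step xl]
    by_cases hc : statT mx my ms n t ω₀ = v
    · simp only [if_pos hc]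
      rw [← Finset.mul_sum, sum_mstep hPX1 hQm, mul_one]
    · simp only [if_neg hc, Finset.sum_const_zero]

end Construction


section Core

variable {mx my ms : ℕ}
variable {PS1 : Fin (ms + 1) → ℝ} {PX1 : Fin (mx + 1) → ℝ}
  {Qm : Fin (mx + 1) → Fin (mx + 1) → ℝ}

lemma collapse (t : ℕ) (x : Fin (mx + 1)) (s : ℤ) (y : Fin t → Fin (my + 1))
    (yl : Fin (my + 1)) (g : Traj mx my ms t → Fin (mx + 1) → Fin (my + 1) → ℝ) :
    (∑ ω₀ : Traj mx my ms t, ∑ xl : Fin (mx + 1), ∑ yl' : Fin (my + 1),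
        if ((((xl : ℕ) : ℤ), Sat ω₀ t, Fin.snoc (coeY ω₀.2.2) ((yl' : ℕ) : ℤ))
            : ℤ × ℤ × (Fin (t + 1) → ℤ))
            = ((((x : ℕ) : ℤ), s, Fin.snoc (coeY y) ((yl : ℕ) : ℤ))
            : ℤ × ℤ × (Fin (t + 1) → ℤ))
        then g ω₀ xl yl' else 0)
      = ∑ ω₀ : Traj mx my ms t,
          if Sat ω₀ t = s ∧ ω₀.2.2 = y then g ω₀ x yl else 0 := by
  refine Finset.sum_congr rfl fun ω₀ _ => ?_
  have h1 : ∀ xl : Fin (mx + 1), ∀ yl' : Fin (my + 1),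
      (if ((((xl : ℕ) : ℤ), Sat ω₀ t, Fin.snoc (coeY ω₀.2.2) ((yl' : ℕ) : ℤ))
          : ℤ × ℤ × (Fin (t + 1) → ℤ))
          = ((((x : ℕ) : ℤ), s, Fin.snoc (coeY y) ((yl : ℕ) : ℤ))
          : ℤ × ℤ × (Fin (t + 1) → ℤ))
      then g ω₀ xl yl' else 0)
      = if yl' = yl ∧ (xl = x ∧ Sat ω₀ t = s ∧ ω₀.2.2 = y) then g ω₀ xl yl' else 0 :=
    fun xl yl' => if_congr (cond_iff ω₀ xl x yl' yl s y) rfl rfl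
  refine Eq.trans (Finset.sum_congr rfl fun xl _ =>
    Eq.trans (Finset.sum_congr rfl fun yl' _ => h1 xl yl')
      (sum_ite_eq_and yl (fun _ => xl = x ∧ Sat ω₀ t = s ∧ ω₀.2.2 = y)
        (fun yl' => g ω₀ xl yl'))) ?_
  exact sum_ite_eq_and x (fun _ => Sat ω₀ t = s ∧ ω₀.2.2 = y) (fun xl => g ω₀ xl yl)

lemma GA_eq_KA {qa : PolicyA mx my ms} (hqa : CondPMFA qa) (t : ℕ) (x : Fin (mx + 1))
    (s : ℤ) (y : Fin t → Fin (my + 1)) :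
    GA PS1 PX1 Qm qa t x s y = KA PS1 PX1 Qm qa t x s y := by
  rw [GA, Finset.sum_congr rfl fun yl (_ : yl ∈ Finset.univ) => FA_split qa t _]
  rw [Finset.sum_congr rfl fun yl (_ : yl ∈ Finset.univ) => collapse t x s y yl
    (fun ω₀ xl yl' => jointAMarkov PS1 PX1 Qm qa t ω₀ * mstep PX1 Qm t ω₀.2.1 xl
      * qa t (Fin.snoc ω₀.2.1 xl) ω₀.1 ω₀.2.2 yl')]
  rw [Finset.sum_comm, KA]
  refine Finset.sum_congr rfl fun ω₀ _ => ?_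
  by_cases hc : Sat ω₀ t = s ∧ ω₀.2.2 = y
  · simp only [if_pos hc]
    rw [← Finset.mul_sum, (hqa t (Fin.snoc ω₀.2.1 x) ω₀.1 ω₀.2.2).2, mul_one]
  · simp only [if_neg hc, Finset.sum_const_zero]

lemma FB_fact (qb : PolicyB mx my ms) (t : ℕ) (x : Fin (mx + 1)) (s : ℤ)
    (y : Fin t → Fin (my + 1)) (yl : Fin (my + 1)) :
    FB PS1 PX1 Qm qb t (((x : ℕ) : ℤ), s, Fin.snoc (coeY y) ((yl : ℕ) : ℤ))
      = qb t x s y yl * KB PS1 PX1 Qm qb t x s y := by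
  rw [FB_split, collapse t x s y yl
    (fun ω₀ xl yl' => jointBMarkov PS1 PX1 Qm qb t ω₀ * mstep PX1 Qm t ω₀.2.1 xl
      * qb t xl (Sat ω₀ t) ω₀.2.2 yl'), KB, Finset.mul_sum]
  refine Finset.sum_congr rfl fun ω₀ _ => ?_
  by_cases hc : Sat ω₀ t = s ∧ ω₀.2.2 = y
  · rw [if_pos hc, if_pos hc, hc.1, hc.2]
    ring
  · rw [if_neg hc, if_neg hc, mul_zero]

lemma FA_nonneg (hPS1 : IsPMF PS1) (hPX1 : IsPMF PX1) (hQm : ∀ x, IsPMF (Qm x))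
    {qa : PolicyA mx my ms} (hqa : CondPMFA qa) (t : ℕ) (v : ℤ × ℤ × (Fin (t + 1) → ℤ)) :
    0 ≤ FA PS1 PX1 Qm qa t v :=
  Finset.sum_nonneg fun ω _ => jointA_nonneg hPS1 hPX1 hQm hqa (t + 1) ω

lemma GA_nonneg (hPS1 : IsPMF PS1) (hPX1 : IsPMF PX1) (hQm : ∀ x, IsPMF (Qm x))
    {qa : PolicyA mx my ms} (hqa : CondPMFA qa) (t : ℕ) (x : Fin (mx + 1)) (s : ℤ)
    (y : Fin t → Fin (my + 1)) : 0 ≤ GA PS1 PX1 Qm qa t x s y :=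
  Finset.sum_nonneg fun yl _ => FA_nonneg hPS1 hPX1 hQm hqa t _

lemma FA_le_GA (hPS1 : IsPMF PS1) (hPX1 : IsPMF PX1) (hQm : ∀ x, IsPMF (Qm x))
    {qa : PolicyA mx my ms} (hqa : CondPMFA qa) (t : ℕ) (x : Fin (mx + 1)) (s : ℤ)
    (y : Fin t → Fin (my + 1)) (yl : Fin (my + 1)) :
    FA PS1 PX1 Qm qa t (((x : ℕ) : ℤ), s, Fin.snoc (coeY y) ((yl : ℕ) : ℤ))
      ≤ GA PS1 PX1 Qm qa t x s y :=
  Finset.single_le_sum (f := fun yl' : Fin (my + 1) =>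
      FA PS1 PX1 Qm qa t (((x : ℕ) : ℤ), s, Fin.snoc (coeY y) ((yl' : ℕ) : ℤ)))
    (fun yl' _ => FA_nonneg hPS1 hPX1 hQm hqa t _) (Finset.mem_univ yl)

lemma mstep_snocT {t : ℕ} (ω₀ : Traj mx my ms t) (xl : Fin (mx + 1)) (yl : Fin (my + 1))
    (x' : Fin (mx + 1)) :
    mstep PX1 Qm (t + 1) (snocT ω₀ xl yl).2.1 x' = Qm xl x' := by
  show mstep PX1 Qm (t + 1) (Fin.snoc ω₀.2.1 xl) x' = Qm xl x'
  rw [mstep, dif_neg (Nat.succ_ne_zero t)]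
  exact congrArg (fun z => Qm z x') (snoc_mk_last ω₀.2.1 xl (by omega))

lemma collapse2 {t : ℕ} (ylast : Fin (my + 1)) (C : Traj mx my ms t → Fin (mx + 1) → Prop)
    (g : Traj mx my ms t → Fin (mx + 1) → Fin (my + 1) → ℝ)
    [∀ ω₀ xl yl, Decidable (yl = ylast ∧ C ω₀ xl)] [∀ ω₀ xl, Decidable (C ω₀ xl)] :
    (∑ ω₀ : Traj mx my ms t, ∑ xl : Fin (mx + 1), ∑ yl : Fin (my + 1),
        if yl = ylast ∧ C ω₀ xl then g ω₀ xl yl else 0)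
      = ∑ ω₀ : Traj mx my ms t, ∑ xl : Fin (mx + 1),
          if C ω₀ xl then g ω₀ xl ylast else 0 :=
  Finset.sum_congr rfl fun ω₀ _ => Finset.sum_congr rfl fun xl _ =>
    sum_ite_eq_and ylast (fun _ => C ω₀ xl) (g ω₀ xl)

lemma Sat_snoc_succ {t : ℕ} (ω₀ : Traj mx my ms t) (xl : Fin (mx + 1)) (yl : Fin (my + 1)) :
    Sat (snocT ω₀ xl yl) (t + 1) = Sat ω₀ t + (((yl : ℕ) : ℤ) - ((xl : ℕ) : ℤ)) := by
  rw [Sat_succ, Sat_snoc ω₀ xl yl le_rfl, Yat_snoc_last, Xat_snoc_last]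

lemma KA_succ (qa : PolicyA mx my ms) (t : ℕ) (x' : Fin (mx + 1)) (s' : ℤ)
    (y' : Fin (t + 1) → Fin (my + 1)) :
    KA PS1 PX1 Qm qa (t + 1) x' s' y'
      = ∑ xl : Fin (mx + 1),
          FA PS1 PX1 Qm qa t
            (((xl : ℕ) : ℤ), s' + ((xl : ℕ) : ℤ) - ((y' (Fin.last t) : ℕ) : ℤ),
              Fin.snoc (coeY (fun i => y' i.castSucc)) ((y' (Fin.last t) : ℕ) : ℤ))
          * Qm xl x' := by
  rw [KA, sum_traj_succ (fun ω₁ => if Sat ω₁ (t+1) = s' ∧ ω₁.2.2 = y'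
    then jointAMarkov PS1 PX1 Qm qa (t+1) ω₁ * mstep PX1 Qm (t+1) ω₁.2.1 x' else 0)]
  have key : ∀ (ω₀ : Traj mx my ms t) (xl : Fin (mx + 1)) (yl : Fin (my + 1)),
      (if Sat (snocT ω₀ xl yl) (t+1) = s' ∧ (snocT ω₀ xl yl).2.2 = y'
        then jointAMarkov PS1 PX1 Qm qa (t+1) (snocT ω₀ xl yl)
          * mstep PX1 Qm (t+1) (snocT ω₀ xl yl).2.1 x' else 0)
      = if yl = y' (Fin.last t) ∧ (Sat ω₀ t = s' + ((xl : ℕ) : ℤ) - ((y' (Fin.last t) : ℕ) : ℤ)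
          ∧ ω₀.2.2 = (fun i => y' i.castSucc))
        then jointAMarkov PS1 PX1 Qm qa t ω₀ * mstep PX1 Qm t ω₀.2.1 xl
          * qa t (Fin.snoc ω₀.2.1 xl) ω₀.1 ω₀.2.2 yl * Qm xl x' else 0 := by
    intro ω₀ xl yl
    have hcond : (Sat (snocT ω₀ xl yl) (t+1) = s' ∧ (snocT ω₀ xl yl).2.2 = y')
        ↔ (yl = y' (Fin.last t) ∧ (Sat ω₀ t = s' + ((xl : ℕ) : ℤ) - ((y' (Fin.last t) : ℕ) : ℤ)
          ∧ ω₀.2.2 = (fun i => y' i.castSucc))) := by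
      rw [Sat_snoc_succ, show (snocT ω₀ xl yl).2.2 = Fin.snoc ω₀.2.2 yl from rfl, snoc_eq_iff']
      constructor
      · rintro ⟨h1, h2, h3⟩
        refine ⟨h3, by omega, h2⟩
      · rintro ⟨h1, h2, h3⟩
        refine ⟨by rw [h1]; omega, h3, h1⟩
    rw [if_congr hcond (by rw [jointA_snoc, mstep_snocT]) rfl]
  refine Eq.trans (Finset.sum_congr rfl fun ω₀ _ => Finset.sum_congr rfl fun xl _ =>
    Finset.sum_congr rfl fun yl _ => key ω₀ xl yl) ?_
  refine Eq.trans (collapse2 (y' (Fin.last t))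
    (fun ω₀ xl => Sat ω₀ t = s' + ((xl : ℕ) : ℤ) - ((y' (Fin.last t) : ℕ) : ℤ)
      ∧ ω₀.2.2 = (fun i => y' i.castSucc))
    (fun ω₀ xl yl => jointAMarkov PS1 PX1 Qm qa t ω₀ * mstep PX1 Qm t ω₀.2.1 xl
      * qa t (Fin.snoc ω₀.2.1 xl) ω₀.1 ω₀.2.2 yl * Qm xl x')) ?_
  refine Eq.trans Finset.sum_comm ?_
  refine Finset.sum_congr rfl fun xl _ => ?_
  rw [FA_split, collapse t xl (s' + ((xl : ℕ) : ℤ) - ((y' (Fin.last t) : ℕ) : ℤ))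
    (fun i => y' i.castSucc) (y' (Fin.last t))
    (fun ω₀ xl' yl' => jointAMarkov PS1 PX1 Qm qa t ω₀ * mstep PX1 Qm t ω₀.2.1 xl'
      * qa t (Fin.snoc ω₀.2.1 xl') ω₀.1 ω₀.2.2 yl'), Finset.sum_mul]
  refine Finset.sum_congr rfl fun ω₀ _ => ?_
  rw [ite_mul, zero_mul]

lemma KB_succ (qb : PolicyB mx my ms) (t : ℕ) (x' : Fin (mx + 1)) (s' : ℤ)
    (y' : Fin (t + 1) → Fin (my + 1)) :
    KB PS1 PX1 Qm qb (t + 1) x' s' y'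
      = ∑ xl : Fin (mx + 1),
          FB PS1 PX1 Qm qb t
            (((xl : ℕ) : ℤ), s' + ((xl : ℕ) : ℤ) - ((y' (Fin.last t) : ℕ) : ℤ),
              Fin.snoc (coeY (fun i => y' i.castSucc)) ((y' (Fin.last t) : ℕ) : ℤ))
          * Qm xl x' := by
  rw [KB, sum_traj_succ (fun ω₁ => if Sat ω₁ (t+1) = s' ∧ ω₁.2.2 = y'
    then jointBMarkov PS1 PX1 Qm qb (t+1) ω₁ * mstep PX1 Qm (t+1) ω₁.2.1 x' else 0)]
  have key : ∀ (ω₀ : Traj mx my ms t) (xl : Fin (mx + 1)) (yl : Fin (my + 1)),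
      (if Sat (snocT ω₀ xl yl) (t+1) = s' ∧ (snocT ω₀ xl yl).2.2 = y'
        then jointBMarkov PS1 PX1 Qm qb (t+1) (snocT ω₀ xl yl)
          * mstep PX1 Qm (t+1) (snocT ω₀ xl yl).2.1 x' else 0)
      = if yl = y' (Fin.last t) ∧ (Sat ω₀ t = s' + ((xl : ℕ) : ℤ) - ((y' (Fin.last t) : ℕ) : ℤ)
          ∧ ω₀.2.2 = (fun i => y' i.castSucc))
        then jointBMarkov PS1 PX1 Qm qb t ω₀ * mstep PX1 Qm t ω₀.2.1 xl
          * qb t xl (Sat ω₀ t) ω₀.2.2 yl * Qm xl x' else 0 := by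
    intro ω₀ xl yl
    have hcond : (Sat (snocT ω₀ xl yl) (t+1) = s' ∧ (snocT ω₀ xl yl).2.2 = y')
        ↔ (yl = y' (Fin.last t) ∧ (Sat ω₀ t = s' + ((xl : ℕ) : ℤ) - ((y' (Fin.last t) : ℕ) : ℤ)
          ∧ ω₀.2.2 = (fun i => y' i.castSucc))) := by
      rw [Sat_snoc_succ, show (snocT ω₀ xl yl).2.2 = Fin.snoc ω₀.2.2 yl from rfl, snoc_eq_iff']
      constructor
      · rintro ⟨h1, h2, h3⟩
        refine ⟨h3, by omega, h2⟩
      · rintro ⟨h1, h2, h3⟩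
        refine ⟨by rw [h1]; omega, h3, h1⟩
    rw [if_congr hcond (by rw [jointB_snoc, mstep_snocT]) rfl]
  refine Eq.trans (Finset.sum_congr rfl fun ω₀ _ => Finset.sum_congr rfl fun xl _ =>
    Finset.sum_congr rfl fun yl _ => key ω₀ xl yl) ?_
  refine Eq.trans (collapse2 (y' (Fin.last t))
    (fun ω₀ xl => Sat ω₀ t = s' + ((xl : ℕ) : ℤ) - ((y' (Fin.last t) : ℕ) : ℤ)
      ∧ ω₀.2.2 = (fun i => y' i.castSucc))
    (fun ω₀ xl yl => jointBMarkov PS1 PX1 Qm qb t ω₀ * mstep PX1 Qm t ω₀.2.1 xl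
      * qb t xl (Sat ω₀ t) ω₀.2.2 yl * Qm xl x')) ?_
  refine Eq.trans Finset.sum_comm ?_
  refine Finset.sum_congr rfl fun xl _ => ?_
  rw [FB_split, collapse t xl (s' + ((xl : ℕ) : ℤ) - ((y' (Fin.last t) : ℕ) : ℤ))
    (fun i => y' i.castSucc) (y' (Fin.last t))
    (fun ω₀ xl' yl' => jointBMarkov PS1 PX1 Qm qb t ω₀ * mstep PX1 Qm t ω₀.2.1 xl'
      * qb t xl' (Sat ω₀ t) ω₀.2.2 yl'), Finset.sum_mul]
  refine Finset.sum_congr rfl fun ω₀ _ => ?_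
  rw [ite_mul, zero_mul]

lemma K_base (qa : PolicyA mx my ms) (qb : PolicyB mx my ms) (x : Fin (mx + 1)) (s : ℤ)
    (y : Fin 0 → Fin (my + 1)) :
    KA PS1 PX1 Qm qa 0 x s y = KB PS1 PX1 Qm qb 0 x s y := by
  rw [KA, KB]
  refine Finset.sum_congr rfl fun ω₀ _ => ?_
  have hj : jointAMarkov PS1 PX1 Qm qa 0 ω₀ = jointBMarkov PS1 PX1 Qm qb 0 ω₀ := by
    rw [jointAMarkov, jointBMarkov]
    simp
  rw [hj]

end Core


section Final

variable {mx my ms : ℕ}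
variable {PS1 : Fin (ms + 1) → ℝ} {PX1 : Fin (mx + 1) → ℝ}
  {Qm : Fin (mx + 1) → Fin (mx + 1) → ℝ} {qa : PolicyA mx my ms}

lemma qbOf_cond (hPS1 : IsPMF PS1) (hPX1 : IsPMF PX1) (hQm : ∀ x, IsPMF (Qm x))
    (hqa : CondPMFA qa) : CondPMFB (qbOf PS1 PX1 Qm qa) := by
  intro t x s y
  constructor
  · intro yl
    simp only [qbOf]
    split_ifs with h1 h2
    · exact zero_le_one
    · exact le_rfl
    · exact div_nonneg (FA_nonneg hPS1 hPX1 hQm hqa t _)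
        (GA_nonneg hPS1 hPX1 hQm hqa t x s y)
  · simp only [qbOf]
    by_cases hG : GA PS1 PX1 Qm qa t x s y = 0
    · simp only [if_pos hG]
      rw [Finset.sum_ite_eq' Finset.univ
        (⟨(x : ℕ) % (my + 1), Nat.mod_lt _ (Nat.succ_pos my)⟩ : Fin (my + 1))
        (fun _ => (1 : ℝ))]
      rw [if_pos (Finset.mem_univ _)]
    · simp only [if_neg hG]
      rw [← Finset.sum_div,
        show (∑ yl : Fin (my + 1),
            FA PS1 PX1 Qm qa t (((x : ℕ) : ℤ), s, Fin.snoc (coeY y) ((yl : ℕ) : ℤ)))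
          = GA PS1 PX1 Qm qa t x s y from rfl]
      exact div_self hG

lemma hstate_eq_Sat {t : ℕ} (ω : Traj mx my ms (t + 1)) :
    hstate ω.1 (prefX ω (Fin.last t)) (prefY ω (Fin.last t)) = Sat ω t := by
  rw [hstate, Sat]
  congr 1
  rw [← Fin.sum_univ_eq_sum_range (fun k => Yat ω k - Xat ω k) t]
  refine Finset.sum_congr rfl fun i _ => ?_
  rw [Yat_coord ω (show (i : ℕ) < t + 1 by omega),
    Xat_coord ω (show (i : ℕ) < t + 1 by omega)]
  rfl

lemma qbOf_feasible (hxy : mx ≤ my) (hPS1 : IsPMF PS1) (hPX1 : IsPMF PX1)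
    (hQm : ∀ x, IsPMF (Qm x)) (hqa : FeasibleA qa) :
    FeasibleB (qbOf PS1 PX1 Qm qa) := by
  refine ⟨qbOf_cond hPS1 hPX1 hQm hqa.1, ?_⟩
  intro t x s y hs0 hsm yl hne
  simp only [qbOf] at hne
  by_cases hG : GA PS1 PX1 Qm qa t x s y = 0
  · rw [if_pos hG] at hne
    have hyl : yl = ⟨(x : ℕ) % (my + 1), Nat.mod_lt _ (Nat.succ_pos my)⟩ := by
      by_contra h
      rw [if_neg h] at hne
      exact hne rfl
    have hx : (yl : ℕ) = (x : ℕ) := by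
      rw [hyl]
      exact Nat.mod_eq_of_lt (by omega)
    constructor <;> omega
  · rw [if_neg hG] at hne
    have hFA : FA PS1 PX1 Qm qa t (((x : ℕ) : ℤ), s, Fin.snoc (coeY y) ((yl : ℕ) : ℤ)) ≠ 0 := by
      intro h0
      rw [h0, zero_div] at hne
      exact hne rfl
    obtain ⟨ω, hstat, hω⟩ : ∃ ω : Traj mx my ms (t + 1),
        statT mx my ms (t + 1) t ω
          = (((x : ℕ) : ℤ), s, Fin.snoc (coeY y) ((yl : ℕ) : ℤ))
        ∧ jointAMarkov PS1 PX1 Qm qa (t + 1) ω ≠ 0 := by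
      by_contra hcon
      push_neg at hcon
      apply hFA
      rw [FA, pr]
      refine Finset.sum_eq_zero fun ω hω => ?_
      exact hcon ω (Finset.mem_filter.mp hω).2
    have hfac : qa t (prefX ω (Fin.last t)) ω.1 (prefY ω (Fin.last t))
        (ω.2.2 (Fin.last t)) ≠ 0 := by
      intro h0
      apply hω
      rw [jointAMarkov]
      have hz : (∏ u : Fin (t + 1),
          qa (u : ℕ) (prefX ω u) ω.1 (prefY ω u) (ω.2.2 u)) = 0 :=
        Finset.prod_eq_zero (Finset.mem_univ (Fin.last t)) h0
      rw [hz, mul_zero]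
    have hbounds := hqa.2 t (prefX ω (Fin.last t)) ω.1 (prefY ω (Fin.last t))
      (ω.2.2 (Fin.last t)) hfac
    have hS : Sat ω t = s := congrArg (fun p => p.2.1) hstat
    have hX : Xat ω t = ((x : ℕ) : ℤ) := congrArg Prod.fst hstat
    have hY : Yat ω t = ((yl : ℕ) : ℤ) := by
      have h : (statT mx my ms (t + 1) t ω).2.2 (Fin.last t)
          = (Fin.snoc (coeY y) ((yl : ℕ) : ℤ) : Fin (t + 1) → ℤ) (Fin.last t) := by
        rw [hstat]
      rw [Fin.snoc_last] at h
      exact h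
    have hxx : ω.2.1 (Fin.last t) = x :=
      fin_coe_inj ((Xat_coord ω (Nat.lt_succ_self t)).symm.trans hX)
    have hyy : ω.2.2 (Fin.last t) = yl :=
      fin_coe_inj ((Yat_coord ω (Nat.lt_succ_self t)).symm.trans hY)
    rw [hstate_eq_Sat ω] at hbounds
    rw [show prefX ω (Fin.last t) (Fin.last t) = ω.2.1 (Fin.last t) from rfl] at hbounds
    rw [hS, hxx, hyy] at hbounds
    exact hbounds

lemma claim_of_K (hPS1 : IsPMF PS1) (hPX1 : IsPMF PX1) (hQm : ∀ x, IsPMF (Qm x))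
    (hqa : CondPMFA qa) (t : ℕ)
    (hK : ∀ x s y, KA PS1 PX1 Qm qa t x s y
      = KB PS1 PX1 Qm (qbOf PS1 PX1 Qm qa) t x s y) :
    ∀ v, FA PS1 PX1 Qm qa t v = FB PS1 PX1 Qm (qbOf PS1 PX1 Qm qa) t v := by
  intro v
  by_cases hv : ∃ (x : Fin (mx + 1)) (s : ℤ) (y : Fin t → Fin (my + 1)) (yl : Fin (my + 1)),
      v = (((x : ℕ) : ℤ), s, Fin.snoc (coeY y) ((yl : ℕ) : ℤ))
  · obtain ⟨x, s, y, yl, rfl⟩ := hv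
    rw [FB_fact, ← hK x s y]
    by_cases hG : GA PS1 PX1 Qm qa t x s y = 0
    · have hKA0 : KA PS1 PX1 Qm qa t x s y = 0 := by
        rw [← GA_eq_KA hqa]
        exact hG
      rw [hKA0, mul_zero]
      have h1 := FA_nonneg hPS1 hPX1 hQm hqa t
        (((x : ℕ) : ℤ), s, Fin.snoc (coeY y) ((yl : ℕ) : ℤ))
      have h2 := FA_le_GA hPS1 hPX1 hQm hqa t x s y yl
      rw [hG] at h2
      linarith
    · rw [show qbOf PS1 PX1 Qm qa t x s y yl
          = FA PS1 PX1 Qm qa t (((x : ℕ) : ℤ), s, Fin.snoc (coeY y) ((yl : ℕ) : ℤ))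
            / GA PS1 PX1 Qm qa t x s y from by simp only [qbOf]; rw [if_neg hG]]
      rw [← GA_eq_KA hqa, div_mul_cancel₀ _ hG]
  · rw [FA_split, FB_split]
    refine Finset.sum_congr rfl fun ω₀ _ => Finset.sum_congr rfl fun xl _ =>
      Finset.sum_congr rfl fun yl' _ => ?_
    rw [if_neg fun h => hv ⟨xl, Sat ω₀ t, ω₀.2.2, yl', h.symm⟩,
      if_neg fun h => hv ⟨xl, Sat ω₀ t, ω₀.2.2, yl', h.symm⟩]

end Final


/-- For Markov demand and any feasible causal policy `qa`, there is a
feasible policy `qb` in the class `Q_B` such that for every `t < T` the joint pmf of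
`(X_t, S_t, Y^t)` induced by `qb` equals the one induced by `qa`; consequently
`Σ_t I^{qa}(X_t, S_t; Y_t | Y^{t-1}) = Σ_t I^{qb}(X_t, S_t; Y_t | Y^{t-1})`. -/
theorem exists_QB_matching_marginals (mx my ms T : ℕ) (hxy : mx ≤ my)
    (PX1 : Fin (mx + 1) → ℝ) (hPX1 : IsPMF PX1)
    (Qm : Fin (mx + 1) → Fin (mx + 1) → ℝ) (hQm : ∀ x, IsPMF (Qm x))
    (PS1 : Fin (ms + 1) → ℝ) (hPS1 : IsPMF PS1)
    (qa : PolicyA mx my ms) (hqa : FeasibleA qa) :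
    ∃ qb : PolicyB mx my ms, FeasibleB qb ∧
      (∀ t : ℕ, t < T →
        ∀ v : ℤ × ℤ × (Fin (t + 1) → ℤ),
          pr (jointAMarkov PS1 PX1 Qm qa T)
              (fun ω => (Xat ω t, Sat ω t, fun i : Fin (t + 1) => Yat ω (i : ℕ))) v
            = pr (jointBMarkov PS1 PX1 Qm qb T)
                (fun ω => (Xat ω t, Sat ω t, fun i : Fin (t + 1) => Yat ω (i : ℕ))) v) ∧
      (∑ t ∈ Finset.range T,
          condMutInfo (jointAMarkov PS1 PX1 Qm qa T)
            (fun ω => (Xat ω t, Sat ω t)) (fun ω => Yat ω t)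
            (fun ω => fun i : Fin t => Yat ω (i : ℕ))
        = ∑ t ∈ Finset.range T,
            condMutInfo (jointBMarkov PS1 PX1 Qm qb T)
              (fun ω => (Xat ω t, Sat ω t)) (fun ω => Yat ω t)
              (fun ω => fun i : Fin t => Yat ω (i : ℕ))) := by
  refine ⟨qbOf PS1 PX1 Qm qa, qbOf_feasible hxy hPS1 hPX1 hQm hqa, ?_, ?_⟩
  all_goals {
    have hqb : CondPMFB (qbOf PS1 PX1 Qm qa) := qbOf_cond hPS1 hPX1 hQm hqa.1
    have hKall : ∀ t (x : Fin (mx + 1)) (s : ℤ) (y : Fin t → Fin (my + 1)),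
        KA PS1 PX1 Qm qa t x s y = KB PS1 PX1 Qm (qbOf PS1 PX1 Qm qa) t x s y := by
      intro t
      induction t with
      | zero => exact fun x s y => K_base qa (qbOf PS1 PX1 Qm qa) x s y
      | succ n ih =>
        intro x s y
        rw [KA_succ, KB_succ]
        refine Finset.sum_congr rfl fun xl _ => ?_
        exact congrArg (fun z => z * Qm xl x)
          (claim_of_K hPS1 hPX1 hQm hqa.1 n ih _)
    have hclaim : ∀ t v, FA PS1 PX1 Qm qa t v = FB PS1 PX1 Qm (qbOf PS1 PX1 Qm qa) t v :=
      fun t => claim_of_K hPS1 hPX1 hQm hqa.1 t (hKall t)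
    first
    | · intro t ht v
        exact (margA hPX1 hQm hqa.1 ht v).trans
          ((hclaim t v).trans (margB hPX1 hQm hqb ht v).symm)
    | · refine Finset.sum_congr rfl fun t ht => ?_
        have htT : t < T := Finset.mem_range.mp ht
        have hpr : ∀ v, pr (jointAMarkov PS1 PX1 Qm qa T) (statT mx my ms T t) v
            = pr (jointBMarkov PS1 PX1 Qm (qbOf PS1 PX1 Qm qa) T) (statT mx my ms T t) v :=
          fun v => (margA hPX1 hQm hqa.1 htT v).trans
            ((hclaim t v).trans (margB hPX1 hQm hqb htT v).symm)
        exact condMutInfo_comp_congr hpr (fun v => (v.1, v.2.1))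
          (fun v => v.2.2 (Fin.last t)) (fun v => fun i : Fin t => v.2.2 i.castSucc)
  }
end SmartMeter
end

section
/- Let X ~ P_X on 𝒳 and S ~ θ on 𝒮 be independent, let W = S − X with pmf ξ, let Y be drawn given W according to the structured policy b with respect to (θ, ξ), and set S₂ = W + Y. Then for all y ∈ 𝒴 and s ∈ 𝒮, P(S₂ = s, Y = y) = P_X(y) θ(s). In particular Y has marginal pmf P_X, S₂ has marginal pmf θ, and S₂ is independent of Y. -/
open Finset
open scoped Classical

namespace SmartMeter

variable {mx my ms T : ℕ}

lemma extZ_coe' {n : ℕ} (f : Fin (n + 1) → ℝ) (k : Fin (n + 1)) :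
    extZ f ((k : ℕ) : ℤ) = f k := by
  unfold extZ
  rw [dif_pos ⟨Int.ofNat_nonneg _, by exact_mod_cast Nat.lt_succ_iff.mp k.isLt⟩]
  congr 1

lemma xi_term_zero' {mx ms : ℕ} (PX : Fin (mx + 1) → ℝ) (θ : Fin (ms + 1) → ℝ)
    (hPX : ∀ x, 0 ≤ PX x) (hθ : ∀ s, 0 ≤ θ s) (w : ℤ)
    (h : xiOf mx ms PX θ w = 0) (x : Fin (mx + 1)) (s : Fin (ms + 1))
    (hw : ((s : ℕ) : ℤ) - ((x : ℕ) : ℤ) = w) : PX x * θ s = 0 := by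
  unfold xiOf at h
  have hnn : ∀ x' ∈ (univ : Finset (Fin (mx + 1))), 0 ≤ ∑ s' : Fin (ms + 1),
      (if ((s' : ℕ) : ℤ) - ((x' : ℕ) : ℤ) = w then PX x' * θ s' else 0) := by
    intro x' _
    refine Finset.sum_nonneg fun s' _ => ?_
    split_ifs
    · exact mul_nonneg (hPX x') (hθ s')
    · exact le_rfl
  have h1 := (Finset.sum_eq_zero_iff_of_nonneg hnn).mp h x (mem_univ x)
  have hnn2 : ∀ s' ∈ (univ : Finset (Fin (ms + 1))),
      0 ≤ (if ((s' : ℕ) : ℤ) - ((x : ℕ) : ℤ) = w then PX x * θ s' else 0) := by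
    intro s' _
    split_ifs
    · exact mul_nonneg (hPX x) (hθ s')
    · exact le_rfl
  have h2 := (Finset.sum_eq_zero_iff_of_nonneg hnn2).mp h1 s (mem_univ s)
  rwa [if_pos hw] at h2

/-- Under the structured policy `b*` w.r.t. `(θ, ξ)`, with `X ~ PX` and
`S ~ θ` independent, `W = S - X`, `Y | W ~ b*(· | W)` and `S₂ = W + Y`:
`P(S₂ = s, Y = y) = PX(y) θ(s)` for all `y ∈ 𝒴`, `s ∈ 𝒮`; in particular `Y ~ PX`,
`S₂ ~ θ`, and `S₂ ⊥ Y`. -/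
theorem structured_policy_invariance (mx my ms : ℕ) (hxy : mx ≤ my)
    (PX : Fin (mx + 1) → ℝ) (hPX : IsPMF PX)
    (θ : Fin (ms + 1) → ℝ) (hθ : IsPMF θ) :
    let p : Fin (mx + 1) × Fin (ms + 1) × Fin (my + 1) → ℝ :=
      fun ω => PX ω.1 * θ ω.2.1 *
        bstar mx my ms PX θ (((ω.2.1 : ℕ) : ℤ) - ((ω.1 : ℕ) : ℤ)) ω.2.2
    let S2 : Fin (mx + 1) × Fin (ms + 1) × Fin (my + 1) → ℤ :=
      fun ω => ((ω.2.1 : ℕ) : ℤ) - ((ω.1 : ℕ) : ℤ) + ((ω.2.2 : ℕ) : ℤ)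
    let Yv : Fin (mx + 1) × Fin (ms + 1) × Fin (my + 1) → Fin (my + 1) := fun ω => ω.2.2
    (∀ (y : Fin (my + 1)) (s : Fin (ms + 1)),
        pr p (fun ω => (S2 ω, Yv ω)) (((s : ℕ) : ℤ), y) = extZ PX ((y : ℕ) : ℤ) * θ s) ∧
    (∀ y : Fin (my + 1), pr p Yv y = extZ PX ((y : ℕ) : ℤ)) ∧
    (∀ s : Fin (ms + 1), pr p S2 ((s : ℕ) : ℤ) = θ s) ∧
    (∀ (z : ℤ) (y : Fin (my + 1)),
        pr p (fun ω => (S2 ω, Yv ω)) (z, y) = pr p S2 z * pr p Yv y) := by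
  intro p S2 Yv
  obtain ⟨hPX0, hPX1⟩ := hPX
  obtain ⟨hθ0, hθ1⟩ := hθ
  -- support of p lies where S2 ∈ 𝒮
  have hsupp : ∀ ω, p ω ≠ 0 → 0 ≤ S2 ω ∧ S2 ω ≤ (ms : ℤ) := by
    intro ω hp
    have hb : bstar mx my ms PX θ (((ω.2.1 : ℕ) : ℤ) - ((ω.1 : ℕ) : ℤ)) ω.2.2 ≠ 0 := by
      intro h
      apply hp
      simp only [p, h, mul_zero]
    have hθne : extZ θ (((ω.2.2 : ℕ) : ℤ) + ((((ω.2.1 : ℕ) : ℤ)) - ((ω.1 : ℕ) : ℤ))) ≠ 0 := by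
      intro h
      apply hb
      unfold bstar
      split_ifs with h1
      · rfl
      · rw [h, mul_zero, zero_div]
    unfold extZ at hθne
    have hcond : 0 ≤ ((ω.2.2 : ℕ) : ℤ) + (((ω.2.1 : ℕ) : ℤ) - ((ω.1 : ℕ) : ℤ)) ∧
        ((ω.2.2 : ℕ) : ℤ) + (((ω.2.1 : ℕ) : ℤ) - ((ω.1 : ℕ) : ℤ)) ≤ (ms : ℤ) := by
      by_contra hc
      exact hθne (dif_neg hc)
    simp only [S2]
    omega
  -- the key joint computation
  have key : ∀ (y : Fin (my + 1)) (s : Fin (ms + 1)),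
      pr p (fun ω => (S2 ω, Yv ω)) (((s : ℕ) : ℤ), y) = extZ PX ((y : ℕ) : ℤ) * θ s := by
    intro y s
    have hmain : pr p (fun ω => (S2 ω, Yv ω)) (((s : ℕ) : ℤ), y)
        = xiOf mx ms PX θ (((s : ℕ) : ℤ) - ((y : ℕ) : ℤ)) *
          bstar mx my ms PX θ (((s : ℕ) : ℤ) - ((y : ℕ) : ℤ)) y := by
      unfold pr
      rw [Finset.sum_filter]
      simp only [p, S2, Yv, Fintype.sum_prod_type]
      have inner : ∀ (x : Fin (mx + 1)) (s' : Fin (ms + 1)),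
          (∑ y' : Fin (my + 1),
            if (((s' : ℕ) : ℤ) - ((x : ℕ) : ℤ) + ((y' : ℕ) : ℤ), y') = (((s : ℕ) : ℤ), y) then
              PX x * θ s' * bstar mx my ms PX θ (((s' : ℕ) : ℤ) - ((x : ℕ) : ℤ)) y' else 0)
          = (if ((s' : ℕ) : ℤ) - ((x : ℕ) : ℤ) = ((s : ℕ) : ℤ) - ((y : ℕ) : ℤ) then
              PX x * θ s' else 0)
            * bstar mx my ms PX θ (((s : ℕ) : ℤ) - ((y : ℕ) : ℤ)) y := by
        intro x s'
        rw [Finset.sum_eq_single y]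
        · by_cases hc : ((s' : ℕ) : ℤ) - ((x : ℕ) : ℤ) = ((s : ℕ) : ℤ) - ((y : ℕ) : ℤ)
          · rw [if_pos, if_pos hc, hc]
            simp only [Prod.mk.injEq]
            exact ⟨by omega, trivial⟩
          · rw [if_neg, if_neg hc, zero_mul]
            simp only [Prod.mk.injEq, not_and]
            intro h _
            exact hc (by omega)
        · intro y' _ hy'
          rw [if_neg]
          simp only [Prod.mk.injEq, not_and]
          intro _
          exact hy'
        · intro h
          exact absurd (mem_univ y) h
      calc ∑ x : Fin (mx + 1), ∑ s' : Fin (ms + 1), ∑ y' : Fin (my + 1),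
            (if (((s' : ℕ) : ℤ) - ((x : ℕ) : ℤ) + ((y' : ℕ) : ℤ), y') = (((s : ℕ) : ℤ), y) then
              PX x * θ s' * bstar mx my ms PX θ (((s' : ℕ) : ℤ) - ((x : ℕ) : ℤ)) y' else 0)
          = ∑ x : Fin (mx + 1), ∑ s' : Fin (ms + 1),
              (if ((s' : ℕ) : ℤ) - ((x : ℕ) : ℤ) = ((s : ℕ) : ℤ) - ((y : ℕ) : ℤ) then
                PX x * θ s' else 0)
              * bstar mx my ms PX θ (((s : ℕ) : ℤ) - ((y : ℕ) : ℤ)) y := by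
            refine Finset.sum_congr rfl fun x _ => Finset.sum_congr rfl fun s' _ => ?_
            exact inner x s'
        _ = (∑ x : Fin (mx + 1), ∑ s' : Fin (ms + 1),
              if ((s' : ℕ) : ℤ) - ((x : ℕ) : ℤ) = ((s : ℕ) : ℤ) - ((y : ℕ) : ℤ) then
                PX x * θ s' else 0)
              * bstar mx my ms PX θ (((s : ℕ) : ℤ) - ((y : ℕ) : ℤ)) y := by
            rw [Finset.sum_mul]
            refine Finset.sum_congr rfl fun x _ => ?_
            rw [Finset.sum_mul]
        _ = xiOf mx ms PX θ (((s : ℕ) : ℤ) - ((y : ℕ) : ℤ)) *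
              bstar mx my ms PX θ (((s : ℕ) : ℤ) - ((y : ℕ) : ℤ)) y := by
            rw [xiOf]
    rw [hmain]
    by_cases hxi : xiOf mx ms PX θ (((s : ℕ) : ℤ) - ((y : ℕ) : ℤ)) = 0
    · rw [hxi, zero_mul]
      by_cases hy : (y : ℕ) ≤ mx
      · have hx0 : PX ⟨(y : ℕ), Nat.lt_succ_of_le hy⟩ * θ s = 0 :=
          xi_term_zero' PX θ hPX0 hθ0 _ hxi ⟨(y : ℕ), Nat.lt_succ_of_le hy⟩ s (by simp)
        have hext : extZ PX ((y : ℕ) : ℤ) = PX ⟨(y : ℕ), Nat.lt_succ_of_le hy⟩ := by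
          unfold extZ
          rw [dif_pos ⟨Int.ofNat_nonneg _, by exact_mod_cast hy⟩]
          congr 1
        rw [hext]
        exact hx0.symm
      · have hext : extZ PX ((y : ℕ) : ℤ) = 0 := by
          unfold extZ
          rw [dif_neg]
          intro hcon
          exact hy (by exact_mod_cast hcon.2)
        rw [hext, zero_mul]
    · unfold bstar
      rw [if_neg hxi]
      have harg : ((y : ℕ) : ℤ) + (((s : ℕ) : ℤ) - ((y : ℕ) : ℤ)) = ((s : ℕ) : ℤ) := by ring
      rw [harg, extZ_coe']
      field_simp
  -- decomposition of the Y marginal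
  have decompY : ∀ y : Fin (my + 1),
      pr p Yv y = ∑ s : Fin (ms + 1), pr p (fun ω => (S2 ω, Yv ω)) (((s : ℕ) : ℤ), y) := by
    intro y
    unfold pr
    simp_rw [Finset.sum_filter]
    conv_rhs => rw [Finset.sum_comm]
    refine Finset.sum_congr rfl fun ω _ => ?_
    by_cases hy : Yv ω = y
    · rw [if_pos hy]
      by_cases hp : p ω = 0
      · rw [hp]
        refine (Finset.sum_eq_zero fun s _ => ?_).symm
        split_ifs <;> rfl
      · obtain ⟨h1, h2⟩ := hsupp ω hp
        have hs0 : ∀ s : Fin (ms + 1),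
            ((S2 ω, Yv ω) = (((s : ℕ) : ℤ), y)) ↔ s = ⟨(S2 ω).toNat, by omega⟩ := by
          intro s
          rw [Prod.mk.injEq]
          constructor
          · rintro ⟨h3, -⟩
            ext
            simp only [Fin.val_mk]
            omega
          · rintro rfl
            refine ⟨?_, hy⟩
            simp only [Fin.val_mk]
            omega
        simp_rw [hs0]
        rw [Finset.sum_ite_eq' univ]
        rw [if_pos (mem_univ _)]
    · rw [if_neg hy]
      refine (Finset.sum_eq_zero fun s _ => ?_).symm
      rw [if_neg]
      intro h
      exact hy (congrArg Prod.snd h)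
  -- decomposition of the S2 marginal
  have decompS : ∀ s : Fin (ms + 1),
      pr p S2 ((s : ℕ) : ℤ) = ∑ y : Fin (my + 1),
        pr p (fun ω => (S2 ω, Yv ω)) (((s : ℕ) : ℤ), y) := by
    intro s
    unfold pr
    simp_rw [Finset.sum_filter]
    conv_rhs => rw [Finset.sum_comm]
    refine Finset.sum_congr rfl fun ω _ => ?_
    by_cases hs : S2 ω = ((s : ℕ) : ℤ)
    · rw [if_pos hs]
      have hc : ∀ y : Fin (my + 1),
          ((S2 ω, Yv ω) = (((s : ℕ) : ℤ), y)) ↔ y = Yv ω := by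
        intro y
        simp only [Prod.mk.injEq]
        constructor
        · intro h
          exact h.2.symm
        · intro h
          exact ⟨hs, h.symm⟩
      simp_rw [hc]
      rw [Finset.sum_ite_eq' univ]
      rw [if_pos (mem_univ _)]
    · rw [if_neg hs]
      refine (Finset.sum_eq_zero fun y _ => ?_).symm
      rw [if_neg]
      intro h
      exact hs (congrArg Prod.fst h)
  -- sum of the extended pmf
  have sumExt : ∑ y : Fin (my + 1), extZ PX ((y : ℕ) : ℤ) = 1 := by
    rw [← Finset.sum_filter_add_sum_filter_not univ (fun y : Fin (my + 1) => (y : ℕ) ≤ mx)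
        (fun y => extZ PX ((y : ℕ) : ℤ))]
    have hz : ∑ y ∈ univ.filter (fun y : Fin (my + 1) => ¬ (y : ℕ) ≤ mx),
        extZ PX ((y : ℕ) : ℤ) = 0 := by
      refine Finset.sum_eq_zero fun y hy => ?_
      rw [Finset.mem_filter] at hy
      unfold extZ
      rw [dif_neg]
      intro hcon
      exact hy.2 (by exact_mod_cast hcon.2)
    rw [hz, add_zero, ← hPX1]
    refine Finset.sum_nbij'
      (fun y : Fin (my + 1) => (⟨min (y : ℕ) mx, by omega⟩ : Fin (mx + 1)))
      (fun x : Fin (mx + 1) => (⟨(x : ℕ), by have := x.isLt; omega⟩ : Fin (my + 1)))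
      (fun y _ => mem_univ _) ?_ ?_ ?_ ?_
    · intro x _
      rw [Finset.mem_filter]
      exact ⟨mem_univ _, by simp only [Fin.val_mk]; have := x.isLt; omega⟩
    · intro y hy
      rw [Finset.mem_filter] at hy
      ext
      simp only [Fin.val_mk]
      omega
    · intro x _
      ext
      simp only [Fin.val_mk]
      have := x.isLt
      omega
    · intro y hy
      rw [Finset.mem_filter] at hy
      unfold extZ
      rw [dif_pos ⟨Int.ofNat_nonneg _, by exact_mod_cast hy.2⟩]
      congr 1
      ext
      simp only [Fin.val_mk]
      omega
  have margY : ∀ y : Fin (my + 1), pr p Yv y = extZ PX ((y : ℕ) : ℤ) := by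
    intro y
    rw [decompY y]
    simp_rw [key y]
    rw [← Finset.mul_sum, hθ1, mul_one]
  have margS : ∀ s : Fin (ms + 1), pr p S2 ((s : ℕ) : ℤ) = θ s := by
    intro s
    rw [decompS s]
    simp_rw [fun y => key y s]
    rw [← Finset.sum_mul, sumExt, one_mul]
  refine ⟨key, margY, margS, ?_⟩
  intro z y
  by_cases hz : 0 ≤ z ∧ z ≤ (ms : ℤ)
  · have hzs : z = (((⟨z.toNat, by omega⟩ : Fin (ms + 1)) : ℕ) : ℤ) := by
      simp only
      omega
    rw [hzs, key, margS, margY]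
    ring
  · have h1 : pr p (fun ω => (S2 ω, Yv ω)) (z, y) = 0 := by
      unfold pr
      refine Finset.sum_eq_zero fun ω hω => ?_
      rw [mem_filter] at hω
      by_contra hp
      obtain ⟨hl, hr⟩ := hsupp ω hp
      have h3 := congrArg Prod.fst hω.2
      simp only at h3
      exact hz (by omega)
    have h2 : pr p S2 z = 0 := by
      unfold pr
      refine Finset.sum_eq_zero fun ω hω => ?_
      rw [mem_filter] at hω
      by_contra hp
      obtain ⟨hl, hr⟩ := hsupp ω hp
      have h3 := hω.2
      exact hz (by omega)
    rw [h1, h2, zero_mul]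
end SmartMeter
end
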